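/- arXiv:2004.10188 — 8 statements merged into one kernel-verified Lean document; each statement's English description precedes it below -/
import Mathlib

section
/- Let X be a nonempty finite type, p a probability mass function on X with full support, and E : X → ℝ. Write μ = Σ_x p(x)·exp(−E(x)) and A = log μ. For i.i.d. random variables X_1, X_2, … with law p and T_n = log((1/n)·Σ_{i=1}^n exp(−E(X_i))), the expectations converge: lim_{n→∞} 𝔼[T_n] = A. -/
open Finset Filter

section Aux
variable {X : Type*} [Fintype X]

lemma master (n : ℕ) (G : Fin n → X → ℝ) :
    ∑ ω : Fin n → X, ∏ i, G i (ω i) = ∏ i, ∑ x, G i x :=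
  (Fintype.prod_sum G).symm

lemma marg1 {n : ℕ} (p : X → ℝ) (hsum : ∑ x, p x = 1) (g : X → ℝ) (i0 : Fin n) :
    ∑ ω : Fin n → X, (∏ i, p (ω i)) * g (ω i0) = ∑ x, p x * g x := by
  have h := master n (fun i x => p x * (if i = i0 then g x else 1))
  have hL : ∀ ω : Fin n → X,
      (∏ i, p (ω i) * (if i = i0 then g (ω i) else 1)) = (∏ i, p (ω i)) * g (ω i0) := by
    intro ω
    rw [Finset.prod_mul_distrib]
    congr 1
    simp [Finset.prod_ite_eq' Finset.univ i0 (fun i => g (ω i))]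
  have hR : (∏ i : Fin n, ∑ x, p x * (if i = i0 then g x else 1)) = ∑ x, p x * g x := by
    have : ∀ i : Fin n, (∑ x, p x * (if i = i0 then g x else 1))
        = if i = i0 then (∑ x, p x * g x) else 1 := by
      intro i; split_ifs with h <;> simp [h, hsum]
    rw [Finset.prod_congr rfl (fun i _ => this i)]
    simp [Finset.prod_ite_eq' Finset.univ i0 (fun _ => ∑ x, p x * g x)]
  simp only [hL] at h
  rw [h, hR]

lemma marg2 {n : ℕ} (p : X → ℝ) (hsum : ∑ x, p x = 1) (g h : X → ℝ) (i0 j0 : Fin n)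
    (hij : i0 ≠ j0) :
    ∑ ω : Fin n → X, (∏ i, p (ω i)) * (g (ω i0) * h (ω j0))
      = (∑ x, p x * g x) * (∑ x, p x * h x) := by
  have hm := master n (fun i x => p x * (if i = i0 then g x else if i = j0 then h x else 1))
  have key : ∀ (F : Fin n → ℝ), (∀ i, i ≠ i0 → i ≠ j0 → F i = 1) →
      (∏ i, F i) = F i0 * F j0 := by
    intro F hF
    rw [← Finset.prod_subset (Finset.subset_univ ({i0, j0} : Finset (Fin n)))
      (by intro x _ hx; simp at hx; push_neg at hx; exact hF x hx.1 hx.2)]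
    exact Finset.prod_pair hij
  have hL : ∀ ω : Fin n → X,
      (∏ i, p (ω i) * (if i = i0 then g (ω i) else if i = j0 then h (ω i) else 1))
        = (∏ i, p (ω i)) * (g (ω i0) * h (ω j0)) := by
    intro ω
    rw [Finset.prod_mul_distrib]
    congr 1
    rw [key _ (by intro i h1 h2; simp [h1, h2])]
    simp [hij, Ne.symm hij]
  have hR : (∏ i : Fin n, ∑ x, p x * (if i = i0 then g x else if i = j0 then h x else 1))
      = (∑ x, p x * g x) * (∑ x, p x * h x) := by
    rw [key _ (by intro i h1 h2; simp [h1, h2, hsum])]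
    simp [hij, Ne.symm hij]
  simp only [hL] at hm
  rw [hm, hR]

end Aux

lemma logbnd_up {mu t : ℝ} (hmu : 0 < mu) (ht : 0 < t) :
    Real.log t ≤ Real.log mu + (t - mu) / mu := by
  have h := Real.log_le_sub_one_of_pos (div_pos ht hmu)
  rw [Real.log_div ht.ne' hmu.ne'] at h
  have : t / mu - 1 = (t - mu) / mu := by field_simp
  linarith

lemma logbnd_lo {m mu t : ℝ} (hm : 0 < m) (hmu : m ≤ mu) (ht : m ≤ t) :
    Real.log mu + (t - mu) / mu - ((t - mu) * (t - mu)) / (m * m) ≤ Real.log t := by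
  have hmu0 : 0 < mu := lt_of_lt_of_le hm hmu
  have ht0 : 0 < t := lt_of_lt_of_le hm ht
  have h := Real.log_le_sub_one_of_pos (div_pos hmu0 ht0)
  rw [Real.log_div hmu0.ne' ht0.ne'] at h
  have e2 : mu / t - 1 = -((t - mu) / t) := by
    field_simp
    ring
  have e1 : (t - mu) / mu - (t - mu) / t = ((t - mu) * (t - mu)) / (t * mu) := by
    field_simp
  have key2 : ((t - mu) * (t - mu)) / (t * mu) ≤ ((t - mu) * (t - mu)) / (m * m) := by
    apply div_le_div_of_nonneg_left (mul_self_nonneg _) (by positivity)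
    nlinarith
  linarith

set_option maxHeartbeats 1000000

/-- Consistency in expectation of the estimator `T_n`:
`lim_{n→∞} 𝔼[T_n] = A = log μ`. -/
theorem stmt2 {X : Type*} [Fintype X] [Nonempty X]
    (p : X → ℝ) (hp : ∀ x, 0 < p x) (hsum : ∑ x, p x = 1)
    (E : X → ℝ)
    (μ A : ℝ)
    (hμ : μ = ∑ x, p x * Real.exp (-(E x)))
    (hA : A = Real.log μ)
    (ET : ℕ → ℝ)
    (hET : ∀ n : ℕ, 0 < n →
      ET n = ∑ ω : Fin n → X, (∏ i, p (ω i)) *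
        Real.log ((1 / (n : ℝ)) * ∑ i, Real.exp (-(E (ω i))))) :
    Filter.Tendsto (fun n : ℕ => ET n) Filter.atTop (nhds A) := by
  classical
  set f : X → ℝ := fun x => Real.exp (-(E x)) with hf
  have hfpos : ∀ x, 0 < f x := fun x => Real.exp_pos _
  have hμpos : 0 < μ := by
    rw [hμ]
    exact Finset.sum_pos (fun x _ => mul_pos (hp x) (hfpos x)) Finset.univ_nonempty
  obtain ⟨x0, -, hx0⟩ := Finset.exists_min_image Finset.univ f
    ⟨Classical.arbitrary X, Finset.mem_univ _⟩
  set m : ℝ := f x0 with hmdef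
  have hm : 0 < m := hfpos x0
  have hx0' : ∀ x : X, m ≤ f x := fun x => hx0 x (Finset.mem_univ x)
  have hmμ : m ≤ μ := by
    rw [hμ]
    calc m = ∑ x, p x * m := by rw [← Finset.sum_mul, hsum, one_mul]
    _ ≤ ∑ x, p x * f x :=
      Finset.sum_le_sum (fun x _ => mul_le_mul_of_nonneg_left (hx0' x) (hp x).le)
  set c : X → ℝ := fun x => f x - μ with hc
  have hc0 : ∑ x, p x * c x = 0 := by
    simp only [hc, mul_sub]
    rw [Finset.sum_sub_distrib, ← Finset.sum_mul, hsum]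
    rw [hμ]; ring
  set V : ℝ := ∑ x, p x * (c x * c x) with hVdef
  have hV0 : 0 ≤ V :=
    Finset.sum_nonneg (fun x _ => mul_nonneg (hp x).le (mul_self_nonneg _))
  set C : ℝ := V / (m * m) with hCdef
  have key : ∀ n : ℕ, 0 < n → A - C / n ≤ ET n ∧ ET n ≤ A := by
    intro n hn
    have hn' : (0:ℝ) < n := by exact_mod_cast hn
    set W : (Fin n → X) → ℝ := fun ω => ∏ i, p (ω i) with hWdef
    have hW0 : ∀ ω, 0 ≤ W ω := fun ω => Finset.prod_nonneg (fun i _ => (hp _).le)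
    have h1 : ∑ ω : Fin n → X, W ω = 1 := by
      have := master n (fun _ x => p x)
      simpa [hWdef, hsum] using this
    have hmean : ∑ ω : Fin n → X, W ω * (∑ i, c (ω i)) = 0 := by
      calc ∑ ω : Fin n → X, W ω * (∑ i, c (ω i))
          = ∑ ω : Fin n → X, ∑ i, W ω * c (ω i) :=
            Finset.sum_congr rfl (fun ω _ => Finset.mul_sum _ _ _)
        _ = ∑ i : Fin n, ∑ ω : Fin n → X, W ω * c (ω i) := Finset.sum_comm
        _ = ∑ _i : Fin n, (0:ℝ) := by
            refine Finset.sum_congr rfl (fun i _ => ?_)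
            rw [show (∑ ω : Fin n → X, W ω * c (ω i))
                = ∑ ω : Fin n → X, (∏ j, p (ω j)) * c (ω i) from rfl]
            rw [marg1 p hsum c i, hc0]
        _ = 0 := by simp
    have hvar : ∑ ω : Fin n → X,
        W ω * ((∑ i, c (ω i)) * (∑ i, c (ω i))) = n * V := by
      calc ∑ ω : Fin n → X, W ω * ((∑ i, c (ω i)) * (∑ i, c (ω i)))
          = ∑ ω : Fin n → X, ∑ i : Fin n, ∑ j : Fin n, W ω * (c (ω i) * c (ω j)) := by
            refine Finset.sum_congr rfl (fun ω _ => ?_)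
            rw [Finset.sum_mul_sum]
            rw [Finset.mul_sum]
            refine Finset.sum_congr rfl (fun i _ => ?_)
            rw [Finset.mul_sum]
        _ = ∑ i : Fin n, ∑ j : Fin n, ∑ ω : Fin n → X, W ω * (c (ω i) * c (ω j)) := by
            rw [Finset.sum_comm]
            exact Finset.sum_congr rfl (fun i _ => Finset.sum_comm)
        _ = ∑ i : Fin n, ∑ j : Fin n, if i = j then V else 0 := by
            refine Finset.sum_congr rfl (fun i _ => Finset.sum_congr rfl (fun j _ => ?_))
            by_cases hij : i = j
            · subst hij
              simp only [if_pos rfl]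
              exact marg1 p hsum (fun x => c x * c x) i
            · simp only [if_neg hij]
              rw [show (∑ ω : Fin n → X, W ω * (c (ω i) * c (ω j)))
                  = ∑ ω : Fin n → X, (∏ k, p (ω k)) * (c (ω i) * c (ω j)) from rfl]
              rw [marg2 p hsum c c i j hij, hc0, mul_zero]
        _ = ∑ _i : Fin n, V := by simp
        _ = n * V := by simp [mul_comm]
    -- abbreviation for the empirical average
    set t : (Fin n → X) → ℝ := fun ω => (1 / (n:ℝ)) * ∑ i, f (ω i) with htdef
    have hETn : ET n = ∑ ω : Fin n → X, W ω * Real.log (t ω) := by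
      rw [hET n hn]
    have htm : ∀ ω, m ≤ t ω := by
      intro ω
      have hs : (n:ℝ) * m ≤ ∑ i, f (ω i) := by
        calc (n:ℝ) * m = ∑ _i : Fin n, m := by
              simp [Finset.sum_const, nsmul_eq_mul]
        _ ≤ ∑ i, f (ω i) := Finset.sum_le_sum (fun i _ => hx0' _)
      have : t ω = (∑ i, f (ω i)) / n := by rw [htdef]; ring
      rw [this, le_div_iff₀ hn']
      linarith [hs]
    have htpos : ∀ ω, 0 < t ω := fun ω => lt_of_lt_of_le hm (htm ω)
    have hdev : ∀ ω, t ω - μ = (1 / (n:ℝ)) * ∑ i, c (ω i) := by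
      intro ω
      simp only [hc]
      rw [Finset.sum_sub_distrib, mul_sub, htdef]
      simp only [Finset.sum_const, Finset.card_univ, Fintype.card_fin, nsmul_eq_mul]
      have : (1 / (n:ℝ)) * ((n:ℝ) * μ) = μ := by field_simp
      rw [this]
    have hd0 : ∑ ω : Fin n → X, W ω * (t ω - μ) = 0 := by
      calc ∑ ω : Fin n → X, W ω * (t ω - μ)
          = (1 / (n:ℝ)) * ∑ ω : Fin n → X, W ω * (∑ i, c (ω i)) := by
            rw [Finset.mul_sum]
            refine Finset.sum_congr rfl (fun ω _ => ?_)
            rw [hdev ω]; ring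
        _ = 0 := by rw [hmean, mul_zero]
    have hd2 : ∑ ω : Fin n → X, W ω * ((t ω - μ) * (t ω - μ)) = V / n := by
      calc ∑ ω : Fin n → X, W ω * ((t ω - μ) * (t ω - μ))
          = (1 / (n:ℝ))^2 * ∑ ω : Fin n → X, W ω * ((∑ i, c (ω i)) * (∑ i, c (ω i))) := by
            rw [Finset.mul_sum]
            refine Finset.sum_congr rfl (fun ω _ => ?_)
            rw [hdev ω]; ring
        _ = V / n := by rw [hvar]; field_simp
    -- pointwise log bounds
    have hub : ∀ ω, Real.log (t ω) ≤ Real.log μ + (t ω - μ) / μ :=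
      fun ω => logbnd_up hμpos (htpos ω)
    have hlb : ∀ ω, Real.log μ + (t ω - μ) / μ - ((t ω - μ) * (t ω - μ)) / (m * m)
        ≤ Real.log (t ω) :=
      fun ω => logbnd_lo hm hmμ (htm ω)
    constructor
    · -- lower bound
      rw [hETn, hA]
      have step : ∑ ω : Fin n → X,
          W ω * (Real.log μ + (t ω - μ) / μ - ((t ω - μ) * (t ω - μ)) / (m * m))
          = Real.log μ - C / n := by
        have expand : ∀ ω : Fin n → X,
            W ω * (Real.log μ + (t ω - μ) / μ - ((t ω - μ) * (t ω - μ)) / (m * m))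
            = W ω * Real.log μ + (W ω * (t ω - μ)) * (1/μ)
              - (W ω * ((t ω - μ) * (t ω - μ))) * (1/(m*m)) := by
          intro ω; ring
        rw [Finset.sum_congr rfl (fun ω _ => expand ω)]
        rw [Finset.sum_sub_distrib, Finset.sum_add_distrib,
          ← Finset.sum_mul, ← Finset.sum_mul, ← Finset.sum_mul,
          h1, hd0, hd2]
        rw [hCdef]
        field_simp
        ring
      calc Real.log μ - C / n
          = ∑ ω : Fin n → X,
            W ω * (Real.log μ + (t ω - μ) / μ - ((t ω - μ) * (t ω - μ)) / (m * m)) :=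
            step.symm
        _ ≤ ∑ ω : Fin n → X, W ω * Real.log (t ω) :=
            Finset.sum_le_sum (fun ω _ =>
              mul_le_mul_of_nonneg_left (hlb ω) (hW0 ω))
    · -- upper bound
      rw [hETn, hA]
      have step : ∑ ω : Fin n → X, W ω * (Real.log μ + (t ω - μ) / μ) = Real.log μ := by
        have expand : ∀ ω : Fin n → X,
            W ω * (Real.log μ + (t ω - μ) / μ)
            = W ω * Real.log μ + (W ω * (t ω - μ)) * (1/μ) := by
          intro ω; ring
        rw [Finset.sum_congr rfl (fun ω _ => expand ω)]
        rw [Finset.sum_add_distrib, ← Finset.sum_mul, ← Finset.sum_mul, h1, hd0]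
        ring
      calc ∑ ω : Fin n → X, W ω * Real.log (t ω)
          ≤ ∑ ω : Fin n → X, W ω * (Real.log μ + (t ω - μ) / μ) :=
            Finset.sum_le_sum (fun ω _ =>
              mul_le_mul_of_nonneg_left (hub ω) (hW0 ω))
        _ = Real.log μ := step
  have hg : Tendsto (fun n : ℕ => A - C / n) atTop (nhds A) := by
    have h0 : Tendsto (fun n : ℕ => C / n) atTop (nhds 0) :=
      tendsto_const_div_atTop_nhds_zero_nat C
    simpa using tendsto_const_nhds.sub h0
  refine tendsto_of_tendsto_of_tendsto_of_le_of_le' hg tendsto_const_nhds ?_ ?_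
  · filter_upwards [Filter.eventually_gt_atTop 0] with n hn
    exact (key n hn).1
  · filter_upwards [Filter.eventually_gt_atTop 0] with n hn
    exact (key n hn).2
end

section
/- Let X be a nonempty finite type, p a probability mass function on X with full support, and E : X → ℝ. Write μ = Σ_x p(x)·exp(−E(x)), A = log μ, and μ₂ = Σ_x p(x)·exp(−2E(x)) − μ². For i.i.d. random variables X_1, X_2, … with law p and T_n = log((1/n)·Σ_{i=1}^n exp(−E(X_i))), the leading-order bias of T_n satisfies lim_{n→∞} n·(A − 𝔼[T_n]) = μ₂/(2μ²). -/
set_option maxHeartbeats 2000000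

open Finset

namespace Stmt3Aux

variable {X : Type*} [Fintype X]

noncomputable def Em (p : X → ℝ) (n : ℕ) (f : (Fin n → X) → ℝ) : ℝ :=
  ∑ ω : Fin n → X, (∏ i, p (ω i)) * f ω

lemma Em_zero (p : X → ℝ) (f : (Fin 0 → X) → ℝ) : Em p 0 f = f Fin.elim0 := by
  have h : ∀ ω : Fin 0 → X, (∏ i, p (ω i)) * f ω = f Fin.elim0 := by
    intro ω
    have : ω = Fin.elim0 := funext fun i => i.elim0
    simp [this]
  rw [Em, Finset.sum_congr rfl (fun ω _ => h ω), Finset.sum_const]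
  simp

lemma Em_succ (p : X → ℝ) (n : ℕ) (f : (Fin (n+1) → X) → ℝ) :
    Em p (n+1) f = ∑ x, p x * Em p n (fun ω => f (Fin.cons x ω)) := by
  rw [Em, ← Equiv.sum_comp (Fin.consEquiv (fun _ : Fin (n+1) => X))
      (fun ω => (∏ i, p (ω i)) * f ω)]
  rw [Fintype.sum_prod_type]
  refine Finset.sum_congr rfl fun x _ => ?_
  rw [Em, Finset.mul_sum]
  refine Finset.sum_congr rfl fun ω _ => ?_
  simp [Fin.consEquiv, Fin.prod_univ_succ, mul_assoc]

lemma Em_const (p : X → ℝ) (hsum : ∑ x, p x = 1) (n : ℕ) (c : ℝ) :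
    Em p n (fun _ => c) = c := by
  induction n with
  | zero => simp [Em_zero]
  | succ n ih =>
      rw [Em_succ]
      simp only [ih, ← Finset.sum_mul, hsum, one_mul]

lemma Em_le (p : X → ℝ) (hp : ∀ x, 0 ≤ p x) (n : ℕ) (f g : (Fin n → X) → ℝ)
    (h : ∀ ω, f ω ≤ g ω) : Em p n f ≤ Em p n g := by
  refine Finset.sum_le_sum fun ω _ => ?_
  exact mul_le_mul_of_nonneg_left (h ω) (Finset.prod_nonneg fun i _ => hp (ω i))

lemma abs_Em_le (p : X → ℝ) (hp : ∀ x, 0 ≤ p x) (n : ℕ) (f : (Fin n → X) → ℝ) :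
    |Em p n f| ≤ Em p n (fun ω => |f ω|) := by
  refine (Finset.abs_sum_le_sum_abs _ _).trans ?_
  refine Finset.sum_le_sum fun ω _ => ?_
  rw [abs_mul, abs_of_nonneg (Finset.prod_nonneg fun i _ => hp (ω i))]

lemma Em_polyZ (p Z : X → ℝ) (hsum : ∑ x, p x = 1) (n : ℕ) (c0 c1 c2 c3 c4 : ℝ) :
    Em p n (fun ω => c0 + c1 * (∑ i, Z (ω i)) + c2 * (∑ i, Z (ω i))^2
        + c3 * (∑ i, Z (ω i))^3 + c4 * (∑ i, Z (ω i))^4)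
      = c0 + c1 * Em p n (fun ω => ∑ i, Z (ω i))
        + c2 * Em p n (fun ω => (∑ i, Z (ω i))^2)
        + c3 * Em p n (fun ω => (∑ i, Z (ω i))^3)
        + c4 * Em p n (fun ω => (∑ i, Z (ω i))^4) := by
  have h1 : ∑ ω : Fin n → X, ∏ i, p (ω i) = 1 := by
    simpa [Em] using Em_const p hsum n 1
  have key : ∀ (c : ℝ) (g : (Fin n → X) → ℝ),
      ∑ ω : Fin n → X, (∏ i, p (ω i)) * (c * g ω)
        = c * ∑ ω : Fin n → X, (∏ i, p (ω i)) * g ω := by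
    intro c g
    rw [Finset.mul_sum]
    exact Finset.sum_congr rfl fun ω _ => by ring
  have key0 : ∑ ω : Fin n → X, (∏ i, p (ω i)) * c0 = c0 := by
    rw [← Finset.sum_mul, h1, one_mul]
  simp only [Em, mul_add]
  rw [Finset.sum_add_distrib, Finset.sum_add_distrib, Finset.sum_add_distrib,
    Finset.sum_add_distrib, key0, key, key, key, key]

lemma moments (p Z : X → ℝ) (hsum : ∑ x, p x = 1) (hZ : ∑ x, p x * Z x = 0) (n : ℕ) :
    Em p n (fun ω => ∑ i, Z (ω i)) = 0 ∧
    Em p n (fun ω => (∑ i, Z (ω i))^2) = n * (∑ x, p x * Z x ^ 2) ∧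
    Em p n (fun ω => (∑ i, Z (ω i))^3) = n * (∑ x, p x * Z x ^ 3) ∧
    Em p n (fun ω => (∑ i, Z (ω i))^4) =
      n * (∑ x, p x * Z x ^ 4) + 3 * n * ((n:ℝ) - 1) * (∑ x, p x * Z x ^ 2)^2 := by
  induction n with
  | zero => refine ⟨?_, ?_, ?_, ?_⟩ <;> simp [Em_zero]
  | succ n ih =>
    obtain ⟨h1, h2, h3, h4⟩ := ih
    refine ⟨?_, ?_, ?_, ?_⟩
    · have this1 : ∀ x ∈ univ, p x * Em p n (fun ω => ∑ i : Fin (n+1), Z ((Fin.cons x ω : Fin (n+1) → X) i))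
          = p x * Z x := by
        intro x _
        rw [show (fun ω : Fin n → X => ∑ i : Fin (n+1), Z ((Fin.cons x ω : Fin (n+1) → X) i))
            = fun ω => Z x + 1 * (∑ i, Z (ω i)) + 0 * (∑ i, Z (ω i))^2
              + 0 * (∑ i, Z (ω i))^3 + 0 * (∑ i, Z (ω i))^4 from
          funext fun ω => by simp [Fin.sum_univ_succ]]
        rw [Em_polyZ p Z hsum, h1, h2, h3, h4]
        ring
      calc Em p (n+1) (fun ω => ∑ i, Z (ω i))
          = ∑ x, p x * Z x := by
            rw [Em_succ]; exact Finset.sum_congr rfl this1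
        _ = 0 := hZ
    · have this2 : ∀ x ∈ univ, p x * Em p n (fun ω => (∑ i : Fin (n+1), Z ((Fin.cons x ω : Fin (n+1) → X) i))^2)
          = (n : ℝ) * (∑ y, p y * Z y ^ 2) * p x + 2 * 0 * (p x * Z x) + p x * Z x ^ 2 := by
        intro x _
        rw [show (fun ω : Fin n → X => (∑ i : Fin (n+1), Z ((Fin.cons x ω : Fin (n+1) → X) i))^2)
            = fun ω => Z x^2 + (2 * Z x) * (∑ i, Z (ω i)) + 1 * (∑ i, Z (ω i))^2
              + 0 * (∑ i, Z (ω i))^3 + 0 * (∑ i, Z (ω i))^4 from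
          funext fun ω => by simp [Fin.sum_univ_succ]; ring]
        rw [Em_polyZ p Z hsum, h1, h2, h3, h4]
        ring
      calc Em p (n+1) (fun ω => (∑ i, Z (ω i))^2)
          = ∑ x, ((n : ℝ) * (∑ y, p y * Z y ^ 2) * p x + 2 * 0 * (p x * Z x) + p x * Z x ^ 2) := by
            rw [Em_succ]; exact Finset.sum_congr rfl this2
        _ = ((n:ℕ)+1 : ℝ) * (∑ x, p x * Z x ^ 2) := by
            rw [Finset.sum_add_distrib, Finset.sum_add_distrib, ← Finset.mul_sum,
              ← Finset.mul_sum, hsum]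
            ring
        _ = ((n+1 : ℕ) : ℝ) * (∑ x, p x * Z x ^ 2) := by push_cast; ring
    · have this3 : ∀ x ∈ univ, p x * Em p n (fun ω => (∑ i : Fin (n+1), Z ((Fin.cons x ω : Fin (n+1) → X) i))^3)
          = (n : ℝ) * (∑ y, p y * Z y ^ 3) * p x
            + 3 * ((n : ℝ) * (∑ y, p y * Z y ^ 2)) * (p x * Z x) + p x * Z x ^ 3 := by
        intro x _
        rw [show (fun ω : Fin n → X => (∑ i : Fin (n+1), Z ((Fin.cons x ω : Fin (n+1) → X) i))^3)
            = fun ω => Z x^3 + (3 * Z x^2) * (∑ i, Z (ω i)) + (3 * Z x) * (∑ i, Z (ω i))^2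
              + 1 * (∑ i, Z (ω i))^3 + 0 * (∑ i, Z (ω i))^4 from
          funext fun ω => by simp [Fin.sum_univ_succ]; ring]
        rw [Em_polyZ p Z hsum, h1, h2, h3, h4]
        ring
      calc Em p (n+1) (fun ω => (∑ i, Z (ω i))^3)
          = ∑ x, ((n : ℝ) * (∑ y, p y * Z y ^ 3) * p x
            + 3 * ((n : ℝ) * (∑ y, p y * Z y ^ 2)) * (p x * Z x) + p x * Z x ^ 3) := by
            rw [Em_succ]; exact Finset.sum_congr rfl this3
        _ = ((n+1 : ℕ) : ℝ) * (∑ x, p x * Z x ^ 3) := by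
            rw [Finset.sum_add_distrib, Finset.sum_add_distrib, ← Finset.mul_sum,
              ← Finset.mul_sum, hsum, hZ]
            push_cast; ring
    · have this4 : ∀ x ∈ univ, p x * Em p n (fun ω => (∑ i : Fin (n+1), Z ((Fin.cons x ω : Fin (n+1) → X) i))^4)
          = ((n : ℝ) * (∑ y, p y * Z y ^ 4)
              + 3 * (n : ℝ) * ((n:ℝ) - 1) * (∑ y, p y * Z y ^ 2)^2) * p x
            + 4 * ((n : ℝ) * (∑ y, p y * Z y ^ 3)) * (p x * Z x)
            + 6 * ((n : ℝ) * (∑ y, p y * Z y ^ 2)) * (p x * Z x ^ 2)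
            + p x * Z x ^ 4 := by
        intro x _
        rw [show (fun ω : Fin n → X => (∑ i : Fin (n+1), Z ((Fin.cons x ω : Fin (n+1) → X) i))^4)
            = fun ω => Z x^4 + (4 * Z x^3) * (∑ i, Z (ω i)) + (6 * Z x^2) * (∑ i, Z (ω i))^2
              + (4 * Z x) * (∑ i, Z (ω i))^3 + 1 * (∑ i, Z (ω i))^4 from
          funext fun ω => by simp [Fin.sum_univ_succ]; ring]
        rw [Em_polyZ p Z hsum, h1, h2, h3, h4]
        ring
      calc Em p (n+1) (fun ω => (∑ i, Z (ω i))^4)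
          = ∑ x, (((n : ℝ) * (∑ y, p y * Z y ^ 4)
              + 3 * (n : ℝ) * ((n:ℝ) - 1) * (∑ y, p y * Z y ^ 2)^2) * p x
            + 4 * ((n : ℝ) * (∑ y, p y * Z y ^ 3)) * (p x * Z x)
            + 6 * ((n : ℝ) * (∑ y, p y * Z y ^ 2)) * (p x * Z x ^ 2)
            + p x * Z x ^ 4) := by
            rw [Em_succ]; exact Finset.sum_congr rfl this4
        _ = ((n+1 : ℕ) : ℝ) * (∑ x, p x * Z x ^ 4)
            + 3 * ((n+1 : ℕ) : ℝ) * (((n+1 : ℕ):ℝ) - 1) * (∑ x, p x * Z x ^ 2)^2 := by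
            rw [Finset.sum_add_distrib, Finset.sum_add_distrib, Finset.sum_add_distrib,
              ← Finset.mul_sum, ← Finset.mul_sum, ← Finset.mul_sum, hsum, hZ]
            push_cast; ring

set_option maxHeartbeats 1000000 in
lemma remainder_bound {t δ M ε' : ℝ} (hδ : 0 < δ) (hδ1 : δ ≤ 1) (hM : 1 ≤ M)
    (hlb : δ ≤ 1 + t) (hub : 1 + t ≤ M) (hε' : 0 < ε') :
    |Real.log (1+t) - t + t^2/2| ≤
      2*ε'*t^2 + (2/ε' + 16*((|Real.log δ| + |Real.log M|) + M + M^2/2))*t^4 := by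
  set L : ℝ := |Real.log δ| + |Real.log M| with hL
  set K : ℝ := L + M + M^2/2 with hK
  have hL0 : 0 ≤ L := by positivity
  have hK0 : 0 < K := by rw [hK]; nlinarith
  clear_value L K
  have habs : |t| ≤ M := abs_le.2 ⟨by nlinarith, by nlinarith⟩
  have ht4 : |t|^4 = t^4 := by
    rw [← abs_pow, abs_of_nonneg (by positivity)]
  have ht2 : |t|^2 = t^2 := sq_abs t
  have hcube : |t|^3 ≤ ε'*t^2 + t^4/ε' := by
    rcases le_or_gt |t| ε' with h | h
    · calc |t|^3 = |t| * |t|^2 := by ring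
        _ ≤ ε' * |t|^2 := by nlinarith [abs_nonneg t, sq_nonneg t, sq_abs t]
        _ = ε' * t^2 := by rw [ht2]
        _ ≤ ε'*t^2 + t^4/ε' := le_add_of_nonneg_right (by positivity)
    · have h4 : |t|^3 * ε' ≤ |t|^4 := by
        nlinarith [mul_nonneg (pow_nonneg (abs_nonneg t) 3) (sub_nonneg.2 h.le)]
      calc |t|^3 ≤ |t|^4/ε' := (le_div_iff₀ hε').2 h4
        _ = t^4/ε' := by rw [ht4]
        _ ≤ ε'*t^2 + t^4/ε' := le_add_of_nonneg_left (by positivity)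
  rcases le_or_gt |t| (1/2) with hsmall | hbig
  · have h1 : |(-t)| < 1 := by rw [abs_neg]; linarith
    have hbd := Real.abs_log_sub_add_sum_range_le h1 2
    have hsum2 : (∑ i ∈ range 2, (-t) ^ (i + 1) / (i + 1)) = -t + t^2/2 := by
      simp [Finset.sum_range_succ]
      ring
    rw [hsum2, abs_neg] at hbd
    have h1mt : 1 - -t = 1 + t := by ring
    rw [h1mt] at hbd
    have heq : |Real.log (1+t) - t + t^2/2| = |(-t + t^2/2) + Real.log (1+t)| := by
      congr 1; ring
    have hden : (1:ℝ)/2 ≤ 1 - |t| := by linarith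
    have hb2 : |t|^3 / (1 - |t|) ≤ 2 * |t|^3 := by
      rw [div_le_iff₀ (by linarith)]
      nlinarith [abs_nonneg t, pow_nonneg (abs_nonneg t) 3]
    calc |Real.log (1+t) - t + t^2/2| = |(-t + t^2/2) + Real.log (1+t)| := heq
      _ ≤ |t|^(2+1) / (1 - |t|) := hbd
      _ ≤ 2 * |t|^3 := by norm_num at hb2 ⊢; exact hb2
      _ ≤ 2 * (ε'*t^2 + t^4/ε') := by linarith
      _ ≤ 2*ε'*t^2 + (2/ε' + 16*K)*t^4 := by
          have : 0 ≤ K * t^4 := by positivity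
          have h2 : 2 * (t^4/ε') = (2/ε') * t^4 := by ring
          nlinarith
  · -- |t| > 1/2
    have hKbd : |Real.log (1+t) - t + t^2/2| ≤ K := by
      have hpos : (0:ℝ) < 1 + t := lt_of_lt_of_le hδ hlb
      have hl1 : Real.log δ ≤ Real.log (1+t) := Real.log_le_log hδ hlb
      have hl2 : Real.log (1+t) ≤ Real.log M := Real.log_le_log hpos hub
      have hlog : |Real.log (1+t)| ≤ L := by
        rw [abs_le]
        constructor
        · have := neg_abs_le (Real.log δ)
          have := abs_nonneg (Real.log M)
          rw [hL]; linarith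
        · have := le_abs_self (Real.log M)
          have := abs_nonneg (Real.log δ)
          rw [hL]; linarith
      have htsq : t^2 ≤ M^2 := sq_le_sq' (by linarith [neg_abs_le t]) (by linarith [le_abs_self t])
      calc |Real.log (1+t) - t + t^2/2|
          ≤ |Real.log (1+t) - t| + |t^2/2| := abs_add_le _ _
        _ ≤ (|Real.log (1+t)| + |t|) + |t^2/2| :=
            add_le_add_left (abs_sub _ _) _
        _ ≤ L + M + M^2/2 := by
            have h5 : |t^2/2| = t^2/2 := abs_of_nonneg (by positivity)
            rw [h5]
            linarith [hlog, habs, htsq]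
        _ = K := hK.symm
    have ht2q : 1/4 < t^2 := by
      have h := mul_self_lt_mul_self (by norm_num : (0:ℝ) ≤ 1/2) hbig
      rw [abs_mul_abs_self] at h
      nlinarith [h]
    have ht4b : 1 ≤ 16*t^4 := by linarith [ht2q, sq_nonneg (t^2 - 1/4)]
    calc |Real.log (1+t) - t + t^2/2| ≤ K := hKbd
      _ ≤ 16*K*t^4 := by linarith [mul_nonneg hK0.le (by linarith : (0:ℝ) ≤ 16*t^4 - 1)]
      _ ≤ 2*ε'*t^2 + (2/ε' + 16*K)*t^4 := by
          have h1 : 0 ≤ ε'*t^2 := by positivity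
          have h2 : 0 ≤ 2/ε'*t^4 := by positivity
          nlinarith [h1, h2]

lemma Em_sub {X : Type*} [Fintype X] (p : X → ℝ) (n : ℕ) (f g : (Fin n → X) → ℝ) :
    Em p n (fun ω => f ω - g ω) = Em p n f - Em p n g := by
  simp [Em, mul_sub, Finset.sum_sub_distrib]

end Stmt3Aux



/-- Leading-order bias of the estimator `T_n`:
`lim_{n→∞} n (A - 𝔼[T_n]) = μ₂ / (2 μ²)`. -/
theorem stmt3 {X : Type*} [Fintype X] [Nonempty X]
    (p : X → ℝ) (hp : ∀ x, 0 < p x) (hsum : ∑ x, p x = 1)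
    (E : X → ℝ)
    (μ μ₂ A : ℝ)
    (hμ : μ = ∑ x, p x * Real.exp (-(E x)))
    (hμ₂ : μ₂ = (∑ x, p x * Real.exp (-(2 * E x))) - μ ^ 2)
    (hA : A = Real.log μ)
    (ET : ℕ → ℝ)
    (hET : ∀ n : ℕ, 0 < n →
      ET n = ∑ ω : Fin n → X, (∏ i, p (ω i)) *
        Real.log ((1 / (n : ℝ)) * ∑ i, Real.exp (-(E (ω i))))) :
    Filter.Tendsto (fun n : ℕ => (n : ℝ) * (A - ET n)) Filter.atTop
      (nhds (μ₂ / (2 * μ ^ 2))) := by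
  classical
  open Stmt3Aux Finset in
  have hμpos : 0 < μ := by
    rw [hμ]
    exact Finset.sum_pos (fun x _ => mul_pos (hp x) (Real.exp_pos _)) Finset.univ_nonempty
  set Z : X → ℝ := fun x => Real.exp (-(E x)) - μ with hZdef
  have hZ0 : ∑ x, p x * Z x = 0 := by
    rw [hZdef]
    simp only [mul_sub]
    rw [Finset.sum_sub_distrib, ← Finset.sum_mul, hsum, ← hμ]
    ring
  have hm2eq : (∑ x, p x * Z x ^ 2) = μ₂ := by
    rw [hμ₂]
    have hYsq : ∀ x : X, Z x ^ 2
        = Real.exp (-(2 * E x)) - 2*μ*Real.exp (-(E x)) + μ^2 := by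
      intro x
      have hsq : Real.exp (-(E x)) ^ 2 = Real.exp (-(2 * E x)) := by
        rw [sq, ← Real.exp_add]; congr 1; ring
      rw [hZdef]
      calc (Real.exp (-(E x)) - μ)^2
          = Real.exp (-(E x))^2 - 2*μ*Real.exp (-(E x)) + μ^2 := by ring
        _ = Real.exp (-(2 * E x)) - 2*μ*Real.exp (-(E x)) + μ^2 := by rw [hsq]
    calc ∑ x, p x * Z x ^ 2
        = ∑ x, (p x * Real.exp (-(2*E x)) - 2*μ*(p x * Real.exp (-(E x))) + μ^2 * p x) :=
          Finset.sum_congr rfl fun x _ => by rw [hYsq x]; ring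
      _ = (∑ x, p x * Real.exp (-(2 * E x))) - μ ^ 2 := by
          rw [Finset.sum_add_distrib, Finset.sum_sub_distrib, ← Finset.mul_sum,
            ← Finset.mul_sum, ← hμ, hsum]
          ring
  have hm2nn : 0 ≤ ∑ x, p x * Z x ^ 2 :=
    Finset.sum_nonneg fun x _ => mul_nonneg (hp x).le (sq_nonneg _)
  have hm4nn : 0 ≤ ∑ x, p x * Z x ^ 4 :=
    Finset.sum_nonneg fun x _ => mul_nonneg (hp x).le (by positivity)
  obtain ⟨x0, -, hx0⟩ := Finset.exists_min_image (Finset.univ : Finset X)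
    (fun x => Real.exp (-(E x))) ⟨Classical.arbitrary X, Finset.mem_univ _⟩
  obtain ⟨x1, -, hx1⟩ := Finset.exists_max_image (Finset.univ : Finset X)
    (fun x => Real.exp (-(E x))) ⟨Classical.arbitrary X, Finset.mem_univ _⟩
  set a : ℝ := Real.exp (-(E x0)) with hadef
  set b : ℝ := Real.exp (-(E x1)) with hbdef
  have ha : 0 < a := Real.exp_pos _
  have hb : 0 < b := Real.exp_pos _
  have haμ : a ≤ μ := by
    have h1 : a = ∑ x, p x * a := by rw [← Finset.sum_mul, hsum, one_mul]
    rw [hμ, h1]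
    exact Finset.sum_le_sum fun x _ =>
      mul_le_mul_of_nonneg_left (hx0 x (Finset.mem_univ x)) (hp x).le
  have hbμ : μ ≤ b := by
    have h1 : b = ∑ x, p x * b := by rw [← Finset.sum_mul, hsum, one_mul]
    rw [hμ, h1]
    exact Finset.sum_le_sum fun x _ =>
      mul_le_mul_of_nonneg_left (hx1 x (Finset.mem_univ x)) (hp x).le
  have hδ1 : a/μ ≤ 1 := (div_le_one hμpos).2 haμ
  have hM1 : 1 ≤ b/μ := (one_le_div hμpos).2 hbμ
  set K : ℝ := (|Real.log (a/μ)| + |Real.log (b/μ)|) + b/μ + (b/μ)^2/2 with hKdef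
  have hK0 : 0 < K := by
    rw [hKdef]
    have := abs_nonneg (Real.log (a/μ))
    have := abs_nonneg (Real.log (b/μ))
    nlinarith [div_pos hb hμpos]
  -- main quantitative estimate
  have main : ∀ ε' : ℝ, 0 < ε' → ∀ n : ℕ, 1 ≤ n →
      |(n:ℝ) * (A - ET n) - (∑ x, p x * Z x ^ 2)/(2*μ^2)|
        ≤ 2*ε'*(∑ x, p x * Z x ^ 2)/μ^2
          + ((2/ε' + 16*K)*((∑ x, p x * Z x ^ 4) + 3*(∑ x, p x * Z x ^ 2)^2)/μ^4)/(n:ℝ) := by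
    intro ε' hε' n hn
    have hn0 : (0:ℝ) < n := by exact_mod_cast hn
    have hnR : (1:ℝ) ≤ n := by exact_mod_cast hn
    have hnμ : ((n:ℝ)*μ) ≠ 0 := by positivity
    obtain ⟨hM1', hM2', hM3', hM4'⟩ := Stmt3Aux.moments p Z hsum hZ0 n
    have hC0 : 0 < 2/ε' + 16*K := by positivity
    have hsumY : ∀ ω : Fin n → X,
        ∑ i, Real.exp (-(E (ω i))) = (n:ℝ)*μ + ∑ i, Z (ω i) := by
      intro ω
      rw [hZdef]
      simp only [Finset.sum_sub_distrib, Finset.sum_const, Finset.card_univ,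
        Fintype.card_fin, nsmul_eq_mul]
      ring
    have hYlb : ∀ ω : Fin n → X, (n:ℝ)*a ≤ ∑ i, Real.exp (-(E (ω i))) := by
      intro ω
      calc (n:ℝ)*a = ∑ _i : Fin n, a := by
            rw [Finset.sum_const, Finset.card_univ, Fintype.card_fin, nsmul_eq_mul]
        _ ≤ ∑ i, Real.exp (-(E (ω i))) :=
            Finset.sum_le_sum fun i _ => hx0 (ω i) (Finset.mem_univ _)
    have hYub : ∀ ω : Fin n → X, ∑ i, Real.exp (-(E (ω i))) ≤ (n:ℝ)*b := by
      intro ω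
      calc ∑ i, Real.exp (-(E (ω i))) ≤ ∑ _i : Fin n, b :=
            Finset.sum_le_sum fun i _ => hx1 (ω i) (Finset.mem_univ _)
        _ = (n:ℝ)*b := by
            rw [Finset.sum_const, Finset.card_univ, Fintype.card_fin, nsmul_eq_mul]
    have hlb : ∀ ω : Fin n → X, a/μ ≤ 1 + (∑ i, Z (ω i))/((n:ℝ)*μ) := by
      intro ω
      have h1 : 1 + (∑ i, Z (ω i))/((n:ℝ)*μ)
          = (∑ i, Real.exp (-(E (ω i))))/((n:ℝ)*μ) := by
        rw [hsumY ω]; field_simp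
      rw [h1, div_le_div_iff₀ hμpos (by positivity)]
      have := hYlb ω
      nlinarith [hμpos]
    have hub : ∀ ω : Fin n → X, 1 + (∑ i, Z (ω i))/((n:ℝ)*μ) ≤ b/μ := by
      intro ω
      have h1 : 1 + (∑ i, Z (ω i))/((n:ℝ)*μ)
          = (∑ i, Real.exp (-(E (ω i))))/((n:ℝ)*μ) := by
        rw [hsumY ω]; field_simp
      rw [h1, div_le_div_iff₀ (by positivity) hμpos]
      have := hYub ω
      nlinarith [hμpos]
    have hptw : ∀ ω : Fin n → X,
        |Real.log (1 + (∑ i, Z (ω i))/((n:ℝ)*μ)) - (∑ i, Z (ω i))/((n:ℝ)*μ)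
            + ((∑ i, Z (ω i))/((n:ℝ)*μ))^2/2|
          ≤ 2*ε'*((∑ i, Z (ω i))/((n:ℝ)*μ))^2
            + (2/ε' + 16*K)*((∑ i, Z (ω i))/((n:ℝ)*μ))^4 := by
      intro ω
      have h := Stmt3Aux.remainder_bound (t := (∑ i, Z (ω i))/((n:ℝ)*μ))
        (δ := a/μ) (M := b/μ) (by positivity) hδ1 hM1 (hlb ω) (hub ω) hε'
      rw [hKdef]
      exact h
    have hETn : ET n = Stmt3Aux.Em p n
        (fun ω => Real.log ((1/(n:ℝ)) * ∑ i, Real.exp (-(E (ω i))))) := hET n hn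
    have hpt_id : ∀ ω : Fin n → X,
        A - Real.log ((1/(n:ℝ)) * ∑ i, Real.exp (-(E (ω i))))
          = (0 + (-(1/((n:ℝ)*μ))) * (∑ i, Z (ω i))
              + (1/(2*((n:ℝ)*μ)^2)) * (∑ i, Z (ω i))^2
              + 0 * (∑ i, Z (ω i))^3 + 0 * (∑ i, Z (ω i))^4)
            - (Real.log (1 + (∑ i, Z (ω i))/((n:ℝ)*μ)) - (∑ i, Z (ω i))/((n:ℝ)*μ)
                + ((∑ i, Z (ω i))/((n:ℝ)*μ))^2/2) := by
      intro ω
      have h1t : (1/(n:ℝ)) * ∑ i, Real.exp (-(E (ω i)))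
          = μ * (1 + (∑ i, Z (ω i))/((n:ℝ)*μ)) := by
        rw [hsumY ω]; field_simp
      have hpos1 : 0 < 1 + (∑ i, Z (ω i))/((n:ℝ)*μ) :=
        lt_of_lt_of_le (by positivity) (hlb ω)
      rw [h1t, Real.log_mul (ne_of_gt hμpos) (ne_of_gt hpos1), hA]
      field_simp
      ring
    have hEm_id : (n:ℝ) * (A - ET n)
        = (∑ x, p x * Z x ^ 2)/(2*μ^2) - (n:ℝ) * Stmt3Aux.Em p n (fun ω =>
            Real.log (1 + (∑ i, Z (ω i))/((n:ℝ)*μ)) - (∑ i, Z (ω i))/((n:ℝ)*μ)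
              + ((∑ i, Z (ω i))/((n:ℝ)*μ))^2/2) := by
      have e1 : A - ET n = Stmt3Aux.Em p n
          (fun ω => A - Real.log ((1/(n:ℝ)) * ∑ i, Real.exp (-(E (ω i))))) := by
        rw [Stmt3Aux.Em_sub, Stmt3Aux.Em_const p hsum, hETn]
      rw [e1, show (fun ω : Fin n → X =>
            A - Real.log ((1/(n:ℝ)) * ∑ i, Real.exp (-(E (ω i)))))
          = fun ω => (0 + (-(1/((n:ℝ)*μ))) * (∑ i, Z (ω i))
              + (1/(2*((n:ℝ)*μ)^2)) * (∑ i, Z (ω i))^2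
              + 0 * (∑ i, Z (ω i))^3 + 0 * (∑ i, Z (ω i))^4)
            - (Real.log (1 + (∑ i, Z (ω i))/((n:ℝ)*μ)) - (∑ i, Z (ω i))/((n:ℝ)*μ)
                + ((∑ i, Z (ω i))/((n:ℝ)*μ))^2/2) from funext hpt_id]
      rw [Stmt3Aux.Em_sub, Stmt3Aux.Em_polyZ p Z hsum, hM1', hM2', hM3', hM4']
      field_simp
      ring
    have hbnd : |(n:ℝ) * Stmt3Aux.Em p n (fun ω =>
            Real.log (1 + (∑ i, Z (ω i))/((n:ℝ)*μ)) - (∑ i, Z (ω i))/((n:ℝ)*μ)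
              + ((∑ i, Z (ω i))/((n:ℝ)*μ))^2/2)|
        ≤ 2*ε'*(∑ x, p x * Z x ^ 2)/μ^2
          + ((2/ε' + 16*K)*((∑ x, p x * Z x ^ 4) + 3*(∑ x, p x * Z x ^ 2)^2)/μ^4)/(n:ℝ) := by
      have hstep : (∑ x, p x * Z x ^ 4) + 3*((n:ℝ)-1)*(∑ x, p x * Z x ^ 2)^2
          ≤ (n:ℝ)*((∑ x, p x * Z x ^ 4) + 3*(∑ x, p x * Z x ^ 2)^2) := by
        nlinarith [hm4nn, sq_nonneg (∑ x, p x * Z x ^ 2), hnR]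
      calc |(n:ℝ) * Stmt3Aux.Em p n (fun ω =>
            Real.log (1 + (∑ i, Z (ω i))/((n:ℝ)*μ)) - (∑ i, Z (ω i))/((n:ℝ)*μ)
              + ((∑ i, Z (ω i))/((n:ℝ)*μ))^2/2)|
          = (n:ℝ) * |Stmt3Aux.Em p n (fun ω =>
            Real.log (1 + (∑ i, Z (ω i))/((n:ℝ)*μ)) - (∑ i, Z (ω i))/((n:ℝ)*μ)
              + ((∑ i, Z (ω i))/((n:ℝ)*μ))^2/2)| := by
            rw [abs_mul, abs_of_nonneg hn0.le]
        _ ≤ (n:ℝ) * Stmt3Aux.Em p n (fun ω =>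
            |Real.log (1 + (∑ i, Z (ω i))/((n:ℝ)*μ)) - (∑ i, Z (ω i))/((n:ℝ)*μ)
              + ((∑ i, Z (ω i))/((n:ℝ)*μ))^2/2|) :=
            mul_le_mul_of_nonneg_left
              (Stmt3Aux.abs_Em_le p (fun x => (hp x).le) n _) hn0.le
        _ ≤ (n:ℝ) * Stmt3Aux.Em p n (fun ω =>
              0 + 0 * (∑ i, Z (ω i)) + (2*ε'/((n:ℝ)*μ)^2) * (∑ i, Z (ω i))^2
                + 0 * (∑ i, Z (ω i))^3
                + ((2/ε' + 16*K)/((n:ℝ)*μ)^4) * (∑ i, Z (ω i))^4) := by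
            refine mul_le_mul_of_nonneg_left
              (Stmt3Aux.Em_le p (fun x => (hp x).le) n _ _ fun ω => ?_) hn0.le
            have heq : (0:ℝ) + 0 * (∑ i, Z (ω i))
                + (2*ε'/((n:ℝ)*μ)^2) * (∑ i, Z (ω i))^2
                + 0 * (∑ i, Z (ω i))^3
                + ((2/ε' + 16*K)/((n:ℝ)*μ)^4) * (∑ i, Z (ω i))^4
                = 2*ε'*((∑ i, Z (ω i))/((n:ℝ)*μ))^2
                  + (2/ε' + 16*K)*((∑ i, Z (ω i))/((n:ℝ)*μ))^4 := by
              field_simp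
              ring
            rw [heq]
            exact hptw ω
        _ = (n:ℝ) * (0 + 0 * 0 + (2*ε'/((n:ℝ)*μ)^2) * ((n:ℝ)*(∑ x, p x * Z x ^ 2))
              + 0 * ((n:ℝ)*(∑ x, p x * Z x ^ 3))
              + ((2/ε' + 16*K)/((n:ℝ)*μ)^4)
                * ((n:ℝ)*(∑ x, p x * Z x ^ 4)
                    + 3*(n:ℝ)*((n:ℝ)-1)*(∑ x, p x * Z x ^ 2)^2)) := by
            rw [Stmt3Aux.Em_polyZ p Z hsum, hM1', hM2', hM3', hM4']
        _ = 2*ε'*(∑ x, p x * Z x ^ 2)/μ^2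
              + (2/ε' + 16*K)*((∑ x, p x * Z x ^ 4)
                  + 3*((n:ℝ)-1)*(∑ x, p x * Z x ^ 2)^2)/((n:ℝ)^2*μ^4) := by
            field_simp
            ring
        _ ≤ 2*ε'*(∑ x, p x * Z x ^ 2)/μ^2
              + ((2/ε' + 16*K)*((∑ x, p x * Z x ^ 4)
                  + 3*(∑ x, p x * Z x ^ 2)^2)/μ^4)/(n:ℝ) := by
            have h2 : (2/ε' + 16*K)*((∑ x, p x * Z x ^ 4)
                  + 3*((n:ℝ)-1)*(∑ x, p x * Z x ^ 2)^2)/((n:ℝ)^2*μ^4)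
                ≤ (2/ε' + 16*K)*((n:ℝ)*((∑ x, p x * Z x ^ 4)
                  + 3*(∑ x, p x * Z x ^ 2)^2))/((n:ℝ)^2*μ^4) := by
              apply div_le_div_of_nonneg_right ?_ (by positivity)
              exact mul_le_mul_of_nonneg_left hstep hC0.le
            have h3 : (2/ε' + 16*K)*((n:ℝ)*((∑ x, p x * Z x ^ 4)
                  + 3*(∑ x, p x * Z x ^ 2)^2))/((n:ℝ)^2*μ^4)
                = ((2/ε' + 16*K)*((∑ x, p x * Z x ^ 4)
                  + 3*(∑ x, p x * Z x ^ 2)^2)/μ^4)/(n:ℝ) := by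
              field_simp
            linarith [h2, h3.symm.le, h3.le]
    rw [hEm_id]
    have : (∑ x, p x * Z x ^ 2)/(2*μ^2) - (n:ℝ) * Stmt3Aux.Em p n (fun ω =>
            Real.log (1 + (∑ i, Z (ω i))/((n:ℝ)*μ)) - (∑ i, Z (ω i))/((n:ℝ)*μ)
              + ((∑ i, Z (ω i))/((n:ℝ)*μ))^2/2)
          - (∑ x, p x * Z x ^ 2)/(2*μ^2)
        = -((n:ℝ) * Stmt3Aux.Em p n (fun ω =>
            Real.log (1 + (∑ i, Z (ω i))/((n:ℝ)*μ)) - (∑ i, Z (ω i))/((n:ℝ)*μ)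
              + ((∑ i, Z (ω i))/((n:ℝ)*μ))^2/2)) := by ring
    rw [this, abs_neg]
    exact hbnd
  -- conclude
  rw [Metric.tendsto_atTop]
  intro ε hε
  have hε'pos : 0 < ε*μ^2/(8*((∑ x, p x * Z x ^ 2)+1)) :=
    div_pos (mul_pos hε (by positivity)) (by positivity)
  obtain ⟨N, hN⟩ := exists_nat_gt
    (((2/(ε*μ^2/(8*((∑ x, p x * Z x ^ 2)+1))) + 16*K)
        *((∑ x, p x * Z x ^ 4) + 3*(∑ x, p x * Z x ^ 2)^2)/μ^4) / (ε/4))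
  refine ⟨max N 1, fun n hn => ?_⟩
  have hn1 : 1 ≤ n := le_trans (le_max_right N 1) hn
  have hnN : (N:ℝ) ≤ n := Nat.cast_le.2 (le_trans (le_max_left N 1) hn)
  have hn0 : (0:ℝ) < n := by
    have : (1:ℝ) ≤ n := by exact_mod_cast hn1
    linarith
  have hmain := main (ε*μ^2/(8*((∑ x, p x * Z x ^ 2)+1))) hε'pos n hn1
  rw [Real.dist_eq, ← hm2eq]
  have hCf0 : 0 ≤ (2/(ε*μ^2/(8*((∑ x, p x * Z x ^ 2)+1))) + 16*K)
        *((∑ x, p x * Z x ^ 4) + 3*(∑ x, p x * Z x ^ 2)^2)/μ^4 := by positivity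
  have hterm1 : 2*(ε*μ^2/(8*((∑ x, p x * Z x ^ 2)+1)))*(∑ x, p x * Z x ^ 2)/μ^2 ≤ ε/4 := by
    have hs1 : (0:ℝ) < (∑ x, p x * Z x ^ 2)+1 := by linarith
    have heq : 2*(ε*μ^2/(8*((∑ x, p x * Z x ^ 2)+1)))*(∑ x, p x * Z x ^ 2)/μ^2
        = ε*((∑ x, p x * Z x ^ 2)/((∑ x, p x * Z x ^ 2)+1))/4 := by
      field_simp
      ring
    rw [heq]
    have hfr : (∑ x, p x * Z x ^ 2)/((∑ x, p x * Z x ^ 2)+1) ≤ 1 := by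
      rw [div_le_one hs1]; linarith
    calc ε*((∑ x, p x * Z x ^ 2)/((∑ x, p x * Z x ^ 2)+1))/4
        ≤ ε*1/4 := by
          apply div_le_div_of_nonneg_right ?_ (by norm_num)
          exact mul_le_mul_of_nonneg_left hfr hε.le
      _ = ε/4 := by ring
  have hε4 : (0:ℝ) < ε/4 := by linarith
  have hterm2 : ((2/(ε*μ^2/(8*((∑ x, p x * Z x ^ 2)+1))) + 16*K)
        *((∑ x, p x * Z x ^ 4) + 3*(∑ x, p x * Z x ^ 2)^2)/μ^4)/(n:ℝ) < ε/4 := by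
    rw [div_lt_iff₀ hn0]
    have h1 : (2/(ε*μ^2/(8*((∑ x, p x * Z x ^ 2)+1))) + 16*K)
        *((∑ x, p x * Z x ^ 4) + 3*(∑ x, p x * Z x ^ 2)^2)/μ^4 < N * (ε/4) :=
      (div_lt_iff₀ hε4).1 hN
    have h2 : (N:ℝ) * (ε/4) ≤ (n:ℝ) * (ε/4) :=
      mul_le_mul_of_nonneg_right hnN hε4.le
    calc (2/(ε*μ^2/(8*((∑ x, p x * Z x ^ 2)+1))) + 16*K)
        *((∑ x, p x * Z x ^ 4) + 3*(∑ x, p x * Z x ^ 2)^2)/μ^4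
        < (N:ℝ) * (ε/4) := h1
      _ ≤ (n:ℝ) * (ε/4) := h2
      _ = ε/4 * n := by ring
  calc |(n:ℝ)*(A - ET n) - (∑ x, p x * Z x ^ 2)/(2*μ^2)|
      ≤ 2*(ε*μ^2/(8*((∑ x, p x * Z x ^ 2)+1)))*(∑ x, p x * Z x ^ 2)/μ^2
        + ((2/(ε*μ^2/(8*((∑ x, p x * Z x ^ 2)+1))) + 16*K)
            *((∑ x, p x * Z x ^ 4) + 3*(∑ x, p x * Z x ^ 2)^2)/μ^4)/(n:ℝ) := hmain
    _ < ε/4 + ε/4 := by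
        have := hterm1
        have := hterm2
        linarith
    _ < ε := by linarith
end

section
/- Let X be a nonempty finite type, p a probability mass function on X with full support, and E : X → ℝ. Write μ = Σ_x p(x)·exp(−E(x)) and A = log μ. For i.i.d. random variables X_1, X_2, … with law p and T_n = log((1/n)·Σ_{i=1}^n exp(−E(X_i))), define the bias-corrected estimator U_n = (2n−1)·T_n − 2(n−1)·T_{n−1} for n ≥ 2. Then lim_{n→∞} 𝔼[U_n] = A. -/
open Finset Real Filter

lemma sum_cons_split {X : Type*} [Fintype X] (n : ℕ) (F : (Fin (n+1) → X) → ℝ) :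
    ∑ ω : Fin (n+1) → X, F ω = ∑ x : X, ∑ ω : Fin n → X, F (Fin.cons x ω) := by
  rw [← (Fin.consEquiv (fun _ : Fin (n+1) => X)).sum_comp F, Fintype.sum_prod_type]
  rfl

lemma triple_comm {α β : Type*} [Fintype α] [Fintype β] (r : Finset ℕ) (F : ℕ → α → β → ℝ) :
    ∑ x : α, ∑ ω : β, ∑ j ∈ r, F j x ω = ∑ j ∈ r, ∑ x : α, ∑ ω : β, F j x ω := by
  trans ∑ x : α, ∑ j ∈ r, ∑ ω : β, F j x ω
  · exact Finset.sum_congr rfl fun x _ => Finset.sum_comm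
  · exact Finset.sum_comm

noncomputable def Mk {X : Type*} [Fintype X] (p Z : X → ℝ) (k n : ℕ) : ℝ :=
  ∑ ω : Fin n → X, (∏ i, p (ω i)) * (∑ i, Z (ω i)) ^ k

lemma Mk_rec {X : Type*} [Fintype X] (p Z : X → ℝ) (k n : ℕ) :
    Mk p Z k (n+1) = ∑ j ∈ Finset.range (k+1),
      (k.choose j : ℝ) * (∑ x, p x * Z x ^ j) * Mk p Z (k - j) n := by
  rw [Mk, sum_cons_split]
  simp only [Fin.prod_univ_succ, Fin.sum_univ_succ, Fin.cons_zero, Fin.cons_succ]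
  simp_rw [add_pow]
  have h1 : ∀ (x : X) (ω : Fin n → X),
      (p x * ∏ i, p (ω i)) * ∑ j ∈ Finset.range (k+1),
          Z x ^ j * (∑ i, Z (ω i)) ^ (k - j) * (k.choose j : ℝ) =
      ∑ j ∈ Finset.range (k+1),
          (k.choose j : ℝ) * (p x * Z x ^ j) * ((∏ i, p (ω i)) * (∑ i, Z (ω i)) ^ (k - j)) := by
    intro x ω
    rw [Finset.mul_sum]
    exact Finset.sum_congr rfl fun j _ => by ring
  simp_rw [h1]
  rw [triple_comm]
  refine Finset.sum_congr rfl fun j _ => ?_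
  rw [Mk, mul_assoc, Finset.sum_mul_sum, Finset.mul_sum]
  exact Finset.sum_congr rfl fun x _ => by
    rw [Finset.mul_sum]
    exact Finset.sum_congr rfl fun ω _ => by ring

section moments
variable {X : Type*} [Fintype X] (p Z : X → ℝ)

lemma Mk_zero_n (hsum : ∑ x, p x = 1) (n : ℕ) : Mk p Z 0 n = 1 := by
  induction n with
  | zero => simp [Mk]
  | succ n ih => simp [Mk_rec, hsum, ih]

lemma Mk_base (k : ℕ) (hk : k ≠ 0) : Mk p Z k 0 = 0 := by
  simp [Mk, zero_pow hk]

lemma Mk_one (hsum : ∑ x, p x = 1) (hz : ∑ x, p x * Z x = 0) (n : ℕ) : Mk p Z 1 n = 0 := by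
  induction n with
  | zero => exact Mk_base p Z 1 one_ne_zero
  | succ n ih =>
    rw [Mk_rec]
    simp [Finset.sum_range_succ, hsum, hz, ih, Mk_zero_n p Z hsum]

lemma Mk_two (hsum : ∑ x, p x = 1) (hz : ∑ x, p x * Z x = 0) (n : ℕ) : Mk p Z 2 n = n * (∑ x, p x * Z x ^ 2) := by
  induction n with
  | zero => simp [Mk_base p Z 2 two_ne_zero]
  | succ n ih =>
    rw [Mk_rec]
    simp only [Finset.sum_range_succ, Finset.sum_range_zero]
    rw [Mk_zero_n p Z hsum, Mk_one p Z hsum hz, ih]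
    simp only [pow_zero, mul_one, pow_one, hsum, hz]
    push_cast [Nat.choose]
    ring

lemma Mk_three (hsum : ∑ x, p x = 1) (hz : ∑ x, p x * Z x = 0) (n : ℕ) : Mk p Z 3 n = n * (∑ x, p x * Z x ^ 3) := by
  induction n with
  | zero => simp [Mk_base p Z 3 three_ne_zero]
  | succ n ih =>
    rw [Mk_rec]
    simp only [Finset.sum_range_succ, Finset.sum_range_zero]
    rw [Mk_zero_n p Z hsum, Mk_one p Z hsum hz, Mk_two p Z hsum hz, ih]
    simp only [pow_zero, mul_one, pow_one, hsum, hz]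
    push_cast [Nat.choose]
    ring

lemma Mk_four (hsum : ∑ x, p x = 1) (hz : ∑ x, p x * Z x = 0) (n : ℕ) : Mk p Z 4 n =
    n * (∑ x, p x * Z x ^ 4) + 3 * n * (n - 1) * (∑ x, p x * Z x ^ 2) ^ 2 := by
  induction n with
  | zero => simp [Mk_base p Z 4 (by norm_num)]
  | succ n ih =>
    rw [Mk_rec]
    simp only [Finset.sum_range_succ, Finset.sum_range_zero]
    rw [Mk_zero_n p Z hsum, Mk_one p Z hsum hz, Mk_two p Z hsum hz, Mk_three p Z hsum hz, ih]
    simp only [pow_zero, mul_one, pow_one, hsum, hz]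
    push_cast [Nat.choose]
    ring

end moments


lemma taylor_log_bound (x₀ x₁ : ℝ) (h0 : 0 < x₀) (x : ℝ) (hl : x₀ ≤ 1 + x) (hu : 1 + x ≤ x₁) :
    |Real.log (1 + x) - x + x ^ 2 / 2| ≤
      (max 2 (8 * (|Real.log x₀| + |Real.log x₁| + (x₁ + 1) + (x₁ + 1) ^ 2 / 2))) * |x| ^ 3 := by
  set K : ℝ := |Real.log x₀| + |Real.log x₁| + (x₁ + 1) + (x₁ + 1) ^ 2 / 2 with hK
  set C : ℝ := max 2 (8 * K) with hC
  have hx1 : 0 < x₁ := lt_of_lt_of_le h0 (le_trans hl hu)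
  have hxn : (0:ℝ) ≤ |x| ^ 3 := by positivity
  rcases le_or_gt |x| (1/2) with h | h
  · have h1 : |(-x)| < 1 := by rw [abs_neg]; linarith
    have h2 := Real.abs_log_sub_add_sum_range_le h1 2
    have h3 : (∑ i ∈ Finset.range 2, (-x) ^ (i + 1) / (i + 1)) = -x + x ^ 2 / 2 := by
      simp [Finset.sum_range_succ]
      ring
    rw [h3, abs_neg] at h2
    have h4 : -x + x ^ 2 / 2 + Real.log (1 - -x) = Real.log (1 + x) - x + x ^ 2 / 2 := by
      ring_nf
    rw [h4] at h2
    norm_num at h2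
    have h5 : |x| ^ 3 / (1 - |x|) ≤ 2 * |x| ^ 3 := by
      rw [div_le_iff₀ (by linarith)]
      nlinarith [mul_nonneg hxn (by linarith : (0:ℝ) ≤ 1 - 2 * |x|)]
    calc |Real.log (1 + x) - x + x ^ 2 / 2| ≤ |x| ^ 3 / (1 - |x|) := h2
      _ ≤ 2 * |x| ^ 3 := h5
      _ ≤ C * |x| ^ 3 := by
          apply mul_le_mul_of_nonneg_right (le_max_left _ _) hxn
  · have hlog : |Real.log (1 + x)| ≤ |Real.log x₀| + |Real.log x₁| := by
      have l1 : Real.log x₀ ≤ Real.log (1 + x) := Real.log_le_log h0 hl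
      have l2 : Real.log (1 + x) ≤ Real.log x₁ := Real.log_le_log (by linarith) hu
      have := neg_abs_le (Real.log x₀)
      have := le_abs_self (Real.log x₁)
      have := abs_nonneg (Real.log x₀)
      have := abs_nonneg (Real.log x₁)
      rw [abs_le]; constructor <;> linarith
    have hxb : |x| ≤ x₁ + 1 := by
      rw [abs_le]; constructor <;> linarith
    have hKnn : 0 ≤ K := by positivity
    have hfK : |Real.log (1 + x) - x + x ^ 2 / 2| ≤ K := by
      have := abs_add_le (Real.log (1 + x) - x) (x ^ 2 / 2)
      have := abs_sub (Real.log (1 + x)) x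
      have h6 : |x ^ 2 / 2| = |x| ^ 2 / 2 := by rw [abs_div, abs_pow]; norm_num
      have h7 : |x| ^ 2 / 2 ≤ (x₁ + 1) ^ 2 / 2 := by
        have : |x| ^ 2 ≤ (x₁ + 1) ^ 2 := by nlinarith [abs_nonneg x]
        linarith
      calc |Real.log (1 + x) - x + x ^ 2 / 2|
          ≤ |Real.log (1 + x) - x| + |x ^ 2 / 2| := abs_add_le _ _
        _ ≤ |Real.log (1 + x)| + |x| + |x ^ 2 / 2| := by
            have := abs_sub (Real.log (1 + x)) x
            linarith [abs_sub_abs_le_abs_sub (Real.log (1+x)) x, abs_sub (Real.log (1+x)) x]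
        _ ≤ K := by rw [h6, hK]; linarith
    have h8 : (1:ℝ)/8 ≤ |x| ^ 3 := by
      have := pow_le_pow_left₀ (by norm_num : (0:ℝ) ≤ 1/2) h.le 3
      norm_num at this
      linarith
    calc |Real.log (1 + x) - x + x ^ 2 / 2| ≤ K := hfK
      _ = 8 * K * (1/8) := by ring
      _ ≤ 8 * K * |x| ^ 3 := mul_le_mul_of_nonneg_left h8 (by positivity)
      _ ≤ C * |x| ^ 3 := mul_le_mul_of_nonneg_right (le_max_right _ _) hxn

section key
variable {X : Type*} [Fintype X] [Nonempty X]


set_option maxHeartbeats 1000000 in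
lemma key (p Y : X → ℝ) (hp : ∀ x, 0 < p x) (hsum : ∑ x, p x = 1)
    (hY : ∀ x, 0 < Y x) (μ σ₂ : ℝ) (hμ : μ = ∑ x, p x * Y x)
    (hσ₂ : σ₂ = ∑ x, p x * (Y x - μ) ^ 2) :
    ∃ K : ℝ, 0 ≤ K ∧ ∀ n : ℕ, 1 ≤ n →
      |(∑ ω : Fin n → X, (∏ i, p (ω i)) * Real.log ((1 / (n : ℝ)) * ∑ i, Y (ω i)))
        - Real.log μ + σ₂ / (2 * μ ^ 2 * n)| ≤ K / ((n : ℝ) * Real.sqrt n) := by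
  have hμpos : 0 < μ := by
    rw [hμ]; exact Finset.sum_pos (fun x _ => mul_pos (hp x) (hY x)) univ_nonempty
  set Z : X → ℝ := fun x => Y x - μ with hZdef
  have hz : ∑ x, p x * Z x = 0 := by
    simp only [hZdef, mul_sub, Finset.sum_sub_distrib, ← hμ, ← Finset.sum_mul, hsum]
    ring
  set σ₄ : ℝ := ∑ x, p x * Z x ^ 4 with hσ₄def
  have hσ₂nn : 0 ≤ σ₂ := by
    rw [hσ₂]; exact Finset.sum_nonneg fun x _ => mul_nonneg (hp x).le (sq_nonneg _)
  have hσ₄nn : 0 ≤ σ₄ := by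
    refine Finset.sum_nonneg fun x _ => mul_nonneg (hp x).le (by positivity)
  set a : ℝ := Finset.univ.inf' univ_nonempty Y with hadef
  set b : ℝ := Finset.univ.sup' univ_nonempty Y with hbdef
  have haY : ∀ x, a ≤ Y x := fun x => Finset.inf'_le _ (mem_univ x)
  have hYb : ∀ x, Y x ≤ b := fun x => Finset.le_sup' _ (mem_univ x)
  have hapos : 0 < a := by
    obtain ⟨x, -, hx⟩ := Finset.exists_mem_eq_inf' univ_nonempty Y
    rw [← hadef] at hx; rw [hx]; exact hY x
  have hbpos : 0 < b := lt_of_lt_of_le hapos (le_trans (haY _) (hYb (Classical.arbitrary X)))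
  set C : ℝ := max 2 (8 * (|Real.log (a/μ)| + |Real.log (b/μ)| + (b/μ + 1) + (b/μ + 1) ^ 2 / 2))
    with hCdef
  have hCpos : 0 < C := lt_of_lt_of_le two_pos (le_max_left _ _)
  set Q : ℝ := σ₂ * (σ₄ + 3 * σ₂ ^ 2) / μ ^ 6 with hQdef
  have hQnn : 0 ≤ Q := by positivity
  refine ⟨C * Real.sqrt Q, by positivity, fun n hn => ?_⟩
  have hn0 : (0 : ℝ) < n := by exact_mod_cast hn
  have hnμ : (0 : ℝ) < n * μ := mul_pos hn0 hμpos
  -- pointwise facts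
  have hSsum : ∀ ω : Fin n → X, ∑ i, Y (ω i) = n * μ + ∑ i, Z (ω i) := by
    intro ω
    simp only [hZdef, Finset.sum_sub_distrib, Finset.sum_const, Finset.card_univ,
      Fintype.card_fin, nsmul_eq_mul]
    ring
  have hSlb : ∀ ω : Fin n → X, (n : ℝ) * a ≤ ∑ i, Y (ω i) := by
    intro ω
    calc (n : ℝ) * a = ∑ _i : Fin n, a := by
          simp [Finset.sum_const, Finset.card_univ, nsmul_eq_mul]
      _ ≤ ∑ i, Y (ω i) := Finset.sum_le_sum fun i _ => haY (ω i)
  have hSub : ∀ ω : Fin n → X, ∑ i, Y (ω i) ≤ (n : ℝ) * b := by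
    intro ω
    calc ∑ i, Y (ω i) ≤ ∑ _i : Fin n, b := Finset.sum_le_sum fun i _ => hYb (ω i)
      _ = (n : ℝ) * b := by simp [Finset.sum_const, Finset.card_univ, nsmul_eq_mul]
  have h1D : ∀ ω : Fin n → X, 1 + (∑ i, Z (ω i)) / (n * μ) = (∑ i, Y (ω i)) / (n * μ) := by
    intro ω
    rw [hSsum ω]
    field_simp
  have hDlb : ∀ ω : Fin n → X, a / μ ≤ 1 + (∑ i, Z (ω i)) / (n * μ) := by
    intro ω
    rw [h1D ω]
    rw [div_le_div_iff₀ hμpos hnμ]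
    have := hSlb ω
    nlinarith
  have hDub : ∀ ω : Fin n → X, 1 + (∑ i, Z (ω i)) / (n * μ) ≤ b / μ := by
    intro ω
    rw [h1D ω]
    rw [div_le_div_iff₀ hnμ hμpos]
    have := hSub ω
    nlinarith
  have hlogω : ∀ ω : Fin n → X,
      Real.log ((1 / (n : ℝ)) * ∑ i, Y (ω i)) =
        Real.log μ + Real.log (1 + (∑ i, Z (ω i)) / (n * μ)) := by
    intro ω
    have h2 : (1 / (n : ℝ)) * ∑ i, Y (ω i) = μ * ((∑ i, Y (ω i)) / (n * μ)) := by
      field_simp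
    have h3 : 0 < (∑ i, Y (ω i)) / (n * μ) :=
      div_pos (lt_of_lt_of_le (mul_pos hn0 hapos) (hSlb ω)) hnμ
    rw [h2, Real.log_mul hμpos.ne' h3.ne', h1D ω]
  -- decomposition
  have main : (∑ ω : Fin n → X, (∏ i, p (ω i)) * Real.log ((1 / (n : ℝ)) * ∑ i, Y (ω i)))
      = Real.log μ + (∑ ω : Fin n → X, (∏ i, p (ω i)) * ((∑ i, Z (ω i)) / (n * μ)))
        - (∑ ω : Fin n → X, (∏ i, p (ω i)) * ((∑ i, Z (ω i)) / (n * μ)) ^ 2) / 2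
        + ∑ ω : Fin n → X, (∏ i, p (ω i)) *
            (Real.log (1 + (∑ i, Z (ω i)) / (n * μ)) - (∑ i, Z (ω i)) / (n * μ)
              + ((∑ i, Z (ω i)) / (n * μ)) ^ 2 / 2) := by
    have hsplit : ∀ ω : Fin n → X,
        (∏ i, p (ω i)) * Real.log ((1 / (n : ℝ)) * ∑ i, Y (ω i)) =
        (∏ i, p (ω i)) * Real.log μ + (∏ i, p (ω i)) * ((∑ i, Z (ω i)) / (n * μ))
          - (∏ i, p (ω i)) * ((∑ i, Z (ω i)) / (n * μ)) ^ 2 / 2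
          + (∏ i, p (ω i)) *
            (Real.log (1 + (∑ i, Z (ω i)) / (n * μ)) - (∑ i, Z (ω i)) / (n * μ)
              + ((∑ i, Z (ω i)) / (n * μ)) ^ 2 / 2) := by
      intro ω
      rw [hlogω ω]
      ring
    rw [Finset.sum_congr rfl fun ω _ => hsplit ω]
    rw [Finset.sum_add_distrib, Finset.sum_sub_distrib, Finset.sum_add_distrib,
      ← Finset.sum_mul]
    have hW1 : (∑ ω : Fin n → X, ∏ i, p (ω i)) = 1 := by
      simpa [Mk] using Mk_zero_n p Z hsum n
    rw [hW1, one_mul]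
    rw [show (∑ ω : Fin n → X, (∏ i, p (ω i)) * ((∑ i, Z (ω i)) / (↑n * μ)) ^ 2 / 2)
        = (∑ ω : Fin n → X, (∏ i, p (ω i)) * ((∑ i, Z (ω i)) / (↑n * μ)) ^ 2) / 2 from
      (Finset.sum_div _ _ _).symm]
  have hM1 : (∑ ω : Fin n → X, (∏ i, p (ω i)) * ((∑ i, Z (ω i)) / (n * μ))) = 0 := by
    have h4 : (∑ ω : Fin n → X, (∏ i, p (ω i)) * (∑ i, Z (ω i))) = 0 := by
      simpa [Mk] using Mk_one p Z hsum hz n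
    calc (∑ ω : Fin n → X, (∏ i, p (ω i)) * ((∑ i, Z (ω i)) / (n * μ)))
        = (∑ ω : Fin n → X, (∏ i, p (ω i)) * (∑ i, Z (ω i))) / (n * μ) := by
          rw [Finset.sum_div]
          exact Finset.sum_congr rfl fun ω _ => by ring
      _ = 0 := by rw [h4, zero_div]
  have hM2 : (∑ ω : Fin n → X, (∏ i, p (ω i)) * ((∑ i, Z (ω i)) / (n * μ)) ^ 2)
      = σ₂ / (n * μ ^ 2) := by
    have h4 : (∑ ω : Fin n → X, (∏ i, p (ω i)) * (∑ i, Z (ω i)) ^ 2) = n * σ₂ := by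
      rw [hσ₂]; exact Mk_two p Z hsum hz n
    calc (∑ ω : Fin n → X, (∏ i, p (ω i)) * ((∑ i, Z (ω i)) / (n * μ)) ^ 2)
        = (∑ ω : Fin n → X, (∏ i, p (ω i)) * (∑ i, Z (ω i)) ^ 2) / (n * μ) ^ 2 := by
          rw [Finset.sum_div]
          exact Finset.sum_congr rfl fun ω _ => by ring
      _ = σ₂ / (n * μ ^ 2) := by rw [h4]; field_simp
  have hM4 : (∑ ω : Fin n → X, (∏ i, p (ω i)) * ((∑ i, Z (ω i)) / (n * μ)) ^ 4)
      ≤ (σ₄ + 3 * σ₂ ^ 2) / (n ^ 2 * μ ^ 4) := by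
    have h4 : (∑ ω : Fin n → X, (∏ i, p (ω i)) * (∑ i, Z (ω i)) ^ 4)
        = n * σ₄ + 3 * n * (n - 1) * σ₂ ^ 2 := by
      rw [hσ₂, hσ₄def]; exact Mk_four p Z hsum hz n
    have h5 : (∑ ω : Fin n → X, (∏ i, p (ω i)) * ((∑ i, Z (ω i)) / (n * μ)) ^ 4)
        = (n * σ₄ + 3 * n * (n - 1) * σ₂ ^ 2) / (n * μ) ^ 4 := by
      rw [← h4, Finset.sum_div]
      exact Finset.sum_congr rfl fun ω _ => by ring
    rw [h5]
    rw [div_le_div_iff₀ (by positivity) (by positivity)]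
    have hn1 : (1 : ℝ) ≤ n := by exact_mod_cast hn
    calc (↑n * σ₄ + 3 * ↑n * (↑n - 1) * σ₂ ^ 2) * (↑n ^ 2 * μ ^ 4)
        ≤ ((σ₄ + 3 * σ₂ ^ 2) * ↑n ^ 2) * (↑n ^ 2 * μ ^ 4) := by
          refine mul_le_mul_of_nonneg_right ?_ (by positivity)
          nlinarith [mul_nonneg (mul_nonneg hn0.le (sub_nonneg.2 hn1)) hσ₄nn,
            mul_nonneg hn0.le (sq_nonneg σ₂)]
      _ = (σ₄ + 3 * σ₂ ^ 2) * (↑n * μ) ^ 4 := by ring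
  have hWpos : ∀ ω : Fin n → X, 0 < ∏ i, p (ω i) :=
    fun ω => Finset.prod_pos fun i _ => hp (ω i)
  have hred : (∑ ω : Fin n → X, (∏ i, p (ω i)) * Real.log ((1 / (n : ℝ)) * ∑ i, Y (ω i)))
      - Real.log μ + σ₂ / (2 * μ ^ 2 * n)
      = ∑ ω : Fin n → X, (∏ i, p (ω i)) *
          (Real.log (1 + (∑ i, Z (ω i)) / (n * μ)) - (∑ i, Z (ω i)) / (n * μ)
            + ((∑ i, Z (ω i)) / (n * μ)) ^ 2 / 2) := by
    rw [main, hM1, hM2]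
    field_simp
    ring
  rw [hred]
  have habs : ∀ d : ℝ, (|d| ^ 3) ^ 2 = d ^ 2 * d ^ 4 := by
    intro d
    calc (|d| ^ 3) ^ 2 = (|d| ^ 2) ^ 3 := by ring
      _ = (d ^ 2) ^ 3 := by rw [sq_abs]
      _ = d ^ 2 * d ^ 4 := by ring
  have cs : (∑ ω : Fin n → X, (∏ i, p (ω i)) * |(∑ i, Z (ω i)) / (n * μ)| ^ 3) ^ 2
      ≤ (∑ ω : Fin n → X, (∏ i, p (ω i)) * ((∑ i, Z (ω i)) / (n * μ)) ^ 2)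
        * (∑ ω : Fin n → X, (∏ i, p (ω i)) * ((∑ i, Z (ω i)) / (n * μ)) ^ 4) := by
    refine Finset.sum_sq_le_sum_mul_sum_of_sq_eq_mul (ι := Fin n → X) Finset.univ
      (r := fun ω => (∏ i, p (ω i)) * |(∑ i, Z (ω i)) / (n * μ)| ^ 3)
      (f := fun ω => (∏ i, p (ω i)) * ((∑ i, Z (ω i)) / (n * μ)) ^ 2)
      (g := fun ω => (∏ i, p (ω i)) * ((∑ i, Z (ω i)) / (n * μ)) ^ 4)
      (fun ω _ => mul_nonneg (hWpos ω).le (sq_nonneg _))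
      (fun ω _ => mul_nonneg (hWpos ω).le (by positivity))
      (fun ω _ => ?_)
    rw [mul_pow, habs]
    ring
  have hDnn : (0:ℝ) ≤ ∑ ω : Fin n → X, (∏ i, p (ω i)) * |(∑ i, Z (ω i)) / (n * μ)| ^ 3 :=
    Finset.sum_nonneg fun ω _ => mul_nonneg (hWpos ω).le (by positivity)
  have hD2nn : (0:ℝ) ≤ ∑ ω : Fin n → X, (∏ i, p (ω i)) * ((∑ i, Z (ω i)) / (n * μ)) ^ 2 :=
    Finset.sum_nonneg fun ω _ => mul_nonneg (hWpos ω).le (sq_nonneg _)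
  have hprod : (∑ ω : Fin n → X, (∏ i, p (ω i)) * ((∑ i, Z (ω i)) / (n * μ)) ^ 2)
      * (∑ ω : Fin n → X, (∏ i, p (ω i)) * ((∑ i, Z (ω i)) / (n * μ)) ^ 4)
      ≤ Q / (n:ℝ) ^ 3 := by
    have harg : σ₂ / (↑n * μ ^ 2) * ((σ₄ + 3 * σ₂ ^ 2) / (↑n ^ 2 * μ ^ 4)) = Q / (n:ℝ) ^ 3 := by
      rw [hQdef, div_mul_div_comm, div_div]
      congr 1
      ring
    rw [← harg, hM2]
    refine mul_le_mul_of_nonneg_left hM4 ?_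
    rw [← hM2]; exact hD2nn
  have hD3 : (∑ ω : Fin n → X, (∏ i, p (ω i)) * |(∑ i, Z (ω i)) / (n * μ)| ^ 3)
      ≤ Real.sqrt Q / ((n:ℝ) * Real.sqrt n) := by
    have h6 : (∑ ω : Fin n → X, (∏ i, p (ω i)) * |(∑ i, Z (ω i)) / (n * μ)| ^ 3)
        = Real.sqrt ((∑ ω : Fin n → X, (∏ i, p (ω i)) * |(∑ i, Z (ω i)) / (n * μ)| ^ 3) ^ 2) :=
      (Real.sqrt_sq hDnn).symm
    rw [h6]
    have h7 := Real.sqrt_le_sqrt (le_trans cs hprod)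
    refine le_trans h7 (le_of_eq ?_)
    rw [Real.sqrt_div hQnn]
    congr 1
    rw [show ((n:ℝ)) ^ 3 = (n:ℝ) ^ 2 * n by ring,
      Real.sqrt_mul (by positivity), Real.sqrt_sq hn0.le]
  calc |∑ ω : Fin n → X, (∏ i, p (ω i)) *
          (Real.log (1 + (∑ i, Z (ω i)) / (n * μ)) - (∑ i, Z (ω i)) / (n * μ)
            + ((∑ i, Z (ω i)) / (n * μ)) ^ 2 / 2)|
      ≤ ∑ ω : Fin n → X, |(∏ i, p (ω i)) *
          (Real.log (1 + (∑ i, Z (ω i)) / (n * μ)) - (∑ i, Z (ω i)) / (n * μ)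
            + ((∑ i, Z (ω i)) / (n * μ)) ^ 2 / 2)| := Finset.abs_sum_le_sum_abs _ _
    _ ≤ ∑ ω : Fin n → X, (∏ i, p (ω i)) * (C * |(∑ i, Z (ω i)) / (n * μ)| ^ 3) := by
        refine Finset.sum_le_sum fun ω _ => ?_
        rw [abs_mul, abs_of_pos (hWpos ω)]
        refine mul_le_mul_of_nonneg_left ?_ (hWpos ω).le
        exact taylor_log_bound (a/μ) (b/μ) (div_pos hapos hμpos) _ (hDlb ω) (hDub ω)
    _ = C * ∑ ω : Fin n → X, (∏ i, p (ω i)) * |(∑ i, Z (ω i)) / (n * μ)| ^ 3 := by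
        rw [Finset.mul_sum]
        exact Finset.sum_congr rfl fun ω _ => by ring
    _ ≤ C * (Real.sqrt Q / ((n:ℝ) * Real.sqrt n)) := mul_le_mul_of_nonneg_left hD3 hCpos.le
    _ = C * Real.sqrt Q / ((n:ℝ) * Real.sqrt n) := by ring
end key


/-- Consistency in expectation of the bias-corrected estimator
`U_n = (2n-1) T_n - 2(n-1) T_{n-1}`: `lim_{n→∞} 𝔼[U_n] = A`. -/
theorem stmt4 {X : Type*} [Fintype X] [Nonempty X]
    (p : X → ℝ) (hp : ∀ x, 0 < p x) (hsum : ∑ x, p x = 1)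
    (E : X → ℝ)
    (μ A : ℝ)
    (hμ : μ = ∑ x, p x * Real.exp (-(E x)))
    (hA : A = Real.log μ)
    (ET : ℕ → ℝ)
    (hET : ∀ n : ℕ, 0 < n →
      ET n = ∑ ω : Fin n → X, (∏ i, p (ω i)) *
        Real.log ((1 / (n : ℝ)) * ∑ i, Real.exp (-(E (ω i)))))
    (EU : ℕ → ℝ)
    (hEU : ∀ n : ℕ, 2 ≤ n →
      EU n = (2 * (n : ℝ) - 1) * ET n - 2 * ((n : ℝ) - 1) * ET (n - 1)) :
    Filter.Tendsto (fun n : ℕ => EU n) Filter.atTop (nhds A) := by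
  have hμpos : 0 < μ := by
    rw [hμ]
    exact Finset.sum_pos (fun x _ => mul_pos (hp x) (Real.exp_pos _)) Finset.univ_nonempty
  have hμ0 : μ ≠ 0 := ne_of_gt hμpos
  set Y : X → ℝ := fun x => Real.exp (-(E x)) with hYdef
  have hY : ∀ x, 0 < Y x := fun x => Real.exp_pos _
  set σ₂ : ℝ := ∑ x, p x * (Y x - μ) ^ 2 with hσ₂def
  obtain ⟨K, hKnn, hkey⟩ := key p Y hp hsum hY μ σ₂ hμ rfl
  have hkeyn : ∀ n : ℕ, 1 ≤ n →
      |ET n - A + σ₂ / (2 * μ ^ 2 * n)| ≤ K / ((n : ℝ) * Real.sqrt n) := by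
    intro n hn
    rw [hET n hn, hA]
    exact hkey n hn
  set L : ℝ := -(σ₂ / (2 * μ ^ 2)) with hLdef
  set g : ℕ → ℝ := fun n => (n : ℝ) * (ET n - A) with hgdef
  have hgbound : ∀ n : ℕ, 1 ≤ n → |g n - L| ≤ K / Real.sqrt n := by
    intro n hn
    have hn0 : (0 : ℝ) < n := by exact_mod_cast hn
    have hn0' : ((n : ℝ)) ≠ 0 := ne_of_gt hn0
    have h1 : g n - L = (n : ℝ) * (ET n - A + σ₂ / (2 * μ ^ 2 * n)) := by
      rw [hgdef, hLdef]
      field_simp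
      ring
    rw [h1, abs_mul, abs_of_pos hn0]
    calc (n : ℝ) * |ET n - A + σ₂ / (2 * μ ^ 2 * n)|
        ≤ (n : ℝ) * (K / ((n : ℝ) * Real.sqrt n)) :=
          mul_le_mul_of_nonneg_left (hkeyn n hn) hn0.le
      _ = K / Real.sqrt n := by
          field_simp
  have hsqrt0 : Filter.Tendsto Real.sqrt Filter.atTop Filter.atTop := by
    refine Filter.tendsto_atTop_atTop_of_monotone (fun a b h => Real.sqrt_le_sqrt h) ?_
    intro c
    exact ⟨c ^ 2, by rw [Real.sqrt_sq_eq_abs]; exact le_abs_self c⟩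
  have hsqrt : Filter.Tendsto (fun n : ℕ => Real.sqrt n) Filter.atTop Filter.atTop :=
    hsqrt0.comp tendsto_natCast_atTop_atTop
  have hKs : Filter.Tendsto (fun n : ℕ => K / Real.sqrt n) Filter.atTop (nhds 0) :=
    Filter.Tendsto.div_atTop tendsto_const_nhds hsqrt
  have hg : Filter.Tendsto g Filter.atTop (nhds L) := by
    rw [tendsto_iff_norm_sub_tendsto_zero]
    refine squeeze_zero' ?_ ?_ hKs
    · exact Filter.Eventually.of_forall fun n => norm_nonneg _
    · filter_upwards [Filter.eventually_atTop.2 ⟨1, fun n hn => hgbound n hn⟩] with n h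
      simpa [Real.norm_eq_abs] using h
  have he : Filter.Tendsto (fun n : ℕ => ET n - A) Filter.atTop (nhds 0) := by
    have h2 : Filter.Tendsto (fun n : ℕ => g n * (1 / (n : ℝ))) Filter.atTop (nhds (L * 0)) :=
      hg.mul tendsto_one_div_atTop_nhds_zero_nat
    rw [mul_zero] at h2
    refine h2.congr' ?_
    filter_upwards [Filter.eventually_ge_atTop 1] with n hn
    have hn0 : ((n : ℝ)) ≠ 0 := Nat.cast_ne_zero.mpr (by omega)
    rw [hgdef]
    field_simp
  have hg' : Filter.Tendsto (fun n : ℕ => g (n - 1)) Filter.atTop (nhds L) :=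
    hg.comp (tendsto_sub_atTop_nat 1)
  have hfinal : Filter.Tendsto
      (fun n : ℕ => A + 2 * g n - (ET n - A) - 2 * g (n - 1)) Filter.atTop (nhds A) := by
    have h3 : Filter.Tendsto
        (fun n : ℕ => A + 2 * g n - (ET n - A) - 2 * g (n - 1)) Filter.atTop
        (nhds (A + 2 * L - 0 - 2 * L)) :=
      (((tendsto_const_nhds.add (hg.const_mul 2)).sub he).sub (hg'.const_mul 2))
    have h4 : A + 2 * L - 0 - 2 * L = A := by ring
    rwa [h4] at h3
  refine hfinal.congr' ?_
  filter_upwards [Filter.eventually_ge_atTop 2] with n hn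
  have h1n : 1 ≤ n := le_trans one_le_two hn
  have hcast : ((n - 1 : ℕ) : ℝ) = (n : ℝ) - 1 := by
    push_cast [Nat.cast_sub h1n]
    ring
  rw [hEU n hn, hgdef]
  simp only [hcast]
  ring
end

section
/- Let X be a nonempty finite type, p a probability mass function on X with full support, and E : X → ℝ. Write μ = Σ_x p(x)·exp(−E(x)) and A = log μ, and assume exp(−E(X)) for X ~ p is not almost surely constant. For i.i.d. random variables X_1, X_2, … with law p, T_n = log((1/n)·Σ_{i=1}^n exp(−E(X_i))), and U_n = (2n−1)·T_n − 2(n−1)·T_{n−1}, there exists N > 0 such that for all n > N one has 𝔼[U_n] > A. -/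
open Finset

set_option linter.all false
set_option maxHeartbeats 1000000

section Aux

variable {X : Type*} [Fintype X]


variable {X : Type*} [Fintype X]

def pmom (p Z : X → ℝ) (k : ℕ) : ℝ := ∑ x, p x * Z x ^ k

def smom (p Z : X → ℝ) (n k : ℕ) : ℝ :=
  ∑ ω : Fin n → X, (∏ i, p (ω i)) * (∑ i, Z (ω i)) ^ k

lemma smom_zero (p Z : X → ℝ) (k : ℕ) :
    smom p Z 0 k = if k = 0 then 1 else 0 := by
  simp only [smom]
  rcases k with _ | k <;> simp

lemma smom_succ (p Z : X → ℝ) (n k : ℕ) :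
    smom p Z (n+1) k =
      ∑ j ∈ range (k+1), (k.choose j : ℝ) * pmom p Z j * smom p Z n (k - j) := by
  unfold smom
  rw [← Equiv.sum_comp (Fin.consEquiv (fun _ : Fin (n+1) => X)), Fintype.sum_prod_type]
  simp only [Fin.consEquiv_apply, Fin.prod_univ_succ, Fin.sum_univ_succ, Fin.cons_zero,
    Fin.cons_succ]
  have h1 : ∀ (x : X) (ω : Fin n → X),
      (p x * ∏ i, p (ω i)) * (Z x + ∑ i, Z (ω i)) ^ k
      = ∑ j ∈ range (k+1), (k.choose j : ℝ) *
          (p x * Z x ^ j) * ((∏ i, p (ω i)) * (∑ i, Z (ω i)) ^ (k - j)) := by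
    intro x ω
    rw [add_pow, mul_sum]
    exact Finset.sum_congr rfl fun j _ => by ring
  simp only [h1]
  rw [Finset.sum_comm (s := (univ : Finset X)) (t := (univ : Finset (Fin n → X)))]
  have h2 : ∀ y : Fin n → X,
      (∑ x : X, ∑ j ∈ range (k+1), (k.choose j : ℝ) *
          (p x * Z x ^ j) * ((∏ i, p (y i)) * (∑ i, Z (y i)) ^ (k - j)))
      = ∑ j ∈ range (k+1), ∑ x : X, (k.choose j : ℝ) *
          (p x * Z x ^ j) * ((∏ i, p (y i)) * (∑ i, Z (y i)) ^ (k - j)) :=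
    fun y => Finset.sum_comm
  simp only [h2]
  rw [Finset.sum_comm (s := (univ : Finset (Fin n → X))) (t := range (k+1))]
  refine Finset.sum_congr rfl fun j _ => ?_
  unfold pmom
  rw [Finset.mul_sum (s := (univ : Finset (Fin n → X)))]
  refine Finset.sum_congr rfl fun ω _ => ?_
  rw [Finset.mul_sum, Finset.sum_mul]

section closed
variable (p Z : X → ℝ) (hm0 : pmom p Z 0 = 1) (hm1 : pmom p Z 1 = 0)
include hm0 hm1

lemma smom_c0 (n : ℕ) : smom p Z n 0 = 1 := by
  induction n with
  | zero => simp [smom_zero]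
  | succ n ih => rw [smom_succ]; simp [Finset.sum_range_succ, hm0, ih]

lemma smom_c1 (n : ℕ) : smom p Z n 1 = 0 := by
  induction n with
  | zero => simp [smom_zero]
  | succ n ih =>
    rw [smom_succ]
    simp [Finset.sum_range_succ, hm0, hm1, ih, smom_c0 p Z hm0 hm1]

lemma smom_c2 (n : ℕ) : smom p Z n 2 = n * pmom p Z 2 := by
  induction n with
  | zero => simp [smom_zero]
  | succ n ih =>
    rw [smom_succ]
    simp [Finset.sum_range_succ, hm0, hm1, ih, smom_c0 p Z hm0 hm1, smom_c1 p Z hm0 hm1]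
    norm_num [Nat.choose]
    push_cast
    ring

lemma smom_c3 (n : ℕ) : smom p Z n 3 = n * pmom p Z 3 := by
  induction n with
  | zero => simp [smom_zero]
  | succ n ih =>
    rw [smom_succ]
    simp [Finset.sum_range_succ, hm0, hm1, ih, smom_c0 p Z hm0 hm1, smom_c1 p Z hm0 hm1,
      smom_c2 p Z hm0 hm1]
    norm_num [Nat.choose]
    push_cast
    ring

lemma smom_c4 (n : ℕ) : smom p Z n 4 =
    n * pmom p Z 4 + 3 * n * (n - 1) * pmom p Z 2 ^ 2 := by
  induction n with
  | zero => simp [smom_zero]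
  | succ n ih =>
    rw [smom_succ]
    simp [Finset.sum_range_succ, hm0, hm1, ih, smom_c0 p Z hm0 hm1, smom_c1 p Z hm0 hm1,
      smom_c2 p Z hm0 hm1, smom_c3 p Z hm0 hm1]
    norm_num [Nat.choose]
    push_cast
    ring

lemma smom_c5 (n : ℕ) : smom p Z n 5 =
    n * pmom p Z 5 + 10 * n * (n - 1) * pmom p Z 2 * pmom p Z 3 := by
  induction n with
  | zero => simp [smom_zero]
  | succ n ih =>
    rw [smom_succ]
    simp [Finset.sum_range_succ, hm0, hm1, ih, smom_c0 p Z hm0 hm1, smom_c1 p Z hm0 hm1,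
      smom_c2 p Z hm0 hm1, smom_c3 p Z hm0 hm1, smom_c4 p Z hm0 hm1]
    norm_num [Nat.choose]
    push_cast
    ring

lemma smom_c6 (n : ℕ) : smom p Z n 6 =
    n * pmom p Z 6 + 15 * n * (n - 1) * pmom p Z 2 * pmom p Z 4
      + 10 * n * (n - 1) * pmom p Z 3 ^ 2
      + 15 * n * (n - 1) * (n - 2) * pmom p Z 2 ^ 3 := by
  induction n with
  | zero => simp [smom_zero]
  | succ n ih =>
    rw [smom_succ]
    simp [Finset.sum_range_succ, hm0, hm1, ih, smom_c0 p Z hm0 hm1, smom_c1 p Z hm0 hm1,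
      smom_c2 p Z hm0 hm1, smom_c3 p Z hm0 hm1, smom_c4 p Z hm0 hm1, smom_c5 p Z hm0 hm1]
    norm_num [Nat.choose]
    push_cast
    ring

end closed


lemma log_taylor_aux (a c : ℝ) (ha : 0 < a) (ha1 : a ≤ 1) (hc : |c| ≤ 1)
    (t : ℝ) (ht : a - 1 ≤ t) :
    0 ≤ t^6/(6*a) + c * (Real.log (1+t) - (t - t^2/2 + t^3/3 - t^4/4 + t^5/5)) := by
  set F : ℝ → ℝ := fun t => t^6/(6*a) + c * (Real.log (1+t) - (t - t^2/2 + t^3/3 - t^4/4 + t^5/5)) with hF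
  have hder : ∀ s : ℝ, -1 < s → HasDerivAt F (s^5 * (1/a - c/(1+s))) s := by
    intro s hs
    have h1 : HasDerivAt (fun s : ℝ => 1 + s) 1 s := by
      simpa using (hasDerivAt_id s).const_add (1:ℝ)
    have hne : (1:ℝ) + s ≠ 0 := by linarith
    have h2 : HasDerivAt (fun s : ℝ => Real.log (1+s)) (1/(1+s)) s := by
      simpa using h1.log hne
    have h3 : HasDerivAt (fun s : ℝ => s - s^2/2 + s^3/3 - s^4/4 + s^5/5)
        (1 - s + s^2 - s^3 + s^4) s := by
      have := ((((hasDerivAt_id s).sub ((hasDerivAt_pow 2 s).div_const 2)).add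
        ((hasDerivAt_pow 3 s).div_const 3)).sub ((hasDerivAt_pow 4 s).div_const 4)).add
        ((hasDerivAt_pow 5 s).div_const 5)
      refine this.congr_deriv ?_
      push_cast
      ring
    have h4 : HasDerivAt (fun s : ℝ => s^6/(6*a)) (6*s^5/(6*a)) s := by
      simpa using (hasDerivAt_pow 6 s).div_const (6*a)
    have h5 := h4.add ((h2.sub h3).const_mul c)
    refine h5.congr_deriv ?_
    have : 1/(1+s) - (1 - s + s^2 - s^3 + s^4) = -s^5/(1+s) := by
      field_simp
      ring
    rw [this]
    field_simp
    ring
  have hfac : ∀ s : ℝ, a - 1 ≤ s → 0 ≤ 1/a - c/(1+s) := by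
    intro s hs
    have hpos : 0 < 1 + s := by linarith
    have h1 : c/(1+s) ≤ 1/(1+s) := by
      rw [div_le_div_iff₀ hpos hpos]
      nlinarith [(abs_le.mp hc).2, hpos]
    have h2 : 1/(1+s) ≤ 1/a := by
      apply one_div_le_one_div_of_le ha
      linarith
    linarith
  have hF0 : F 0 = 0 := by simp [hF]
  have hdiff : DifferentiableOn ℝ F (Set.Ioi (-1 : ℝ)) :=
    fun s hs => ((hder s hs).differentiableAt).differentiableWithinAt
  rcases le_or_gt 0 t with h0 | h0
  · -- monotone on [0, ∞)
    have mono : MonotoneOn F (Set.Ici (0:ℝ)) := by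
      apply monotoneOn_of_deriv_nonneg (convex_Ici 0)
      · exact (hdiff.continuousOn).mono (fun s hs => by
          simp only [Set.mem_Ici] at hs; simp only [Set.mem_Ioi]; linarith)
      · exact hdiff.mono (fun s hs => by
          rw [interior_Ici] at hs
          simp only [Set.mem_Ioi] at hs ⊢; linarith)
      · intro s hs
        rw [interior_Ici] at hs
        simp only [Set.mem_Ioi] at hs
        rw [(hder s (by linarith)).deriv]
        have := hfac s (by linarith)
        have h5 : (0:ℝ) ≤ s^5 := by positivity
        exact mul_nonneg h5 this
    have := mono (Set.mem_Ici.2 le_rfl) (Set.mem_Ici.2 h0) h0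
    rw [hF0] at this
    exact this
  · -- antitone on [a-1, 0]
    have anti : AntitoneOn F (Set.Icc (a-1) 0) := by
      apply antitoneOn_of_deriv_nonpos (convex_Icc _ _)
      · exact (hdiff.continuousOn).mono (fun s hs => by
          simp only [Set.mem_Icc] at hs; simp only [Set.mem_Ioi]; linarith [hs.1])
      · exact hdiff.mono (fun s hs => by
          rw [interior_Icc] at hs
          simp only [Set.mem_Ioo] at hs
          simp only [Set.mem_Ioi]; linarith [hs.1])
      · intro s hs
        rw [interior_Icc] at hs
        simp only [Set.mem_Ioo] at hs
        rw [(hder s (by linarith [hs.1])).deriv]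
        have hf := hfac s (le_of_lt hs.1)
        have h5 : s^5 ≤ 0 := by
          have : s^5 = s^4 * s := by ring
          rw [this]
          exact mul_nonpos_of_nonneg_of_nonpos (by positivity) (le_of_lt hs.2)
        exact mul_nonpos_of_nonpos_of_nonneg h5 hf
    have := anti (Set.mem_Icc.2 ⟨ht, le_of_lt h0⟩) (Set.mem_Icc.2 ⟨by linarith, le_rfl⟩) (le_of_lt h0)
    rw [hF0] at this
    exact this

lemma log_taylor_abs (a : ℝ) (ha : 0 < a) (ha1 : a ≤ 1) (t : ℝ) (ht : a - 1 ≤ t) :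
    |Real.log (1+t) - (t - t^2/2 + t^3/3 - t^4/4 + t^5/5)| ≤ t^6/(6*a) := by
  rw [abs_le]
  constructor
  · have := log_taylor_aux a 1 ha ha1 (by norm_num) t ht
    linarith
  · have := log_taylor_aux a (-1) ha ha1 (by norm_num) t ht
    linarith

-- expected Taylor polynomial value
lemma sum_P5 (p Z : X → ℝ) (n : ℕ) (hn : 1 ≤ n) :
    ∑ ω : Fin n → X, (∏ i, p (ω i)) *
      (((∑ i, Z (ω i))/(n:ℝ)) - ((∑ i, Z (ω i))/(n:ℝ))^2/2 + ((∑ i, Z (ω i))/(n:ℝ))^3/3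
        - ((∑ i, Z (ω i))/(n:ℝ))^4/4 + ((∑ i, Z (ω i))/(n:ℝ))^5/5)
    = smom p Z n 1 * (1/(n:ℝ)) - smom p Z n 2 * (1/(2*(n:ℝ)^2))
      + smom p Z n 3 * (1/(3*(n:ℝ)^3)) - smom p Z n 4 * (1/(4*(n:ℝ)^4))
      + smom p Z n 5 * (1/(5*(n:ℝ)^5)) := by
  have hx : ((n:ℝ)) ≠ 0 := by positivity
  unfold smom
  rw [Finset.sum_mul, Finset.sum_mul, Finset.sum_mul, Finset.sum_mul, Finset.sum_mul,
    ← Finset.sum_sub_distrib, ← Finset.sum_add_distrib, ← Finset.sum_sub_distrib,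
    ← Finset.sum_add_distrib]
  refine Finset.sum_congr rfl fun ω _ => ?_
  field_simp

set_option linter.all false

lemma sum_D6 (p Z : X → ℝ) (n : ℕ) (hn : 1 ≤ n) :
    ∑ ω : Fin n → X, (∏ i, p (ω i)) * ((∑ i, Z (ω i))/(n:ℝ))^6
    = smom p Z n 6 * (1/(n:ℝ)^6) := by
  have hx : ((n:ℝ)) ≠ 0 := by positivity
  unfold smom
  rw [Finset.sum_mul]
  refine Finset.sum_congr rfl fun ω _ => ?_
  field_simp

-- nonnegativity of even pmoms
lemma pmom_even_nonneg (p Z : X → ℝ) (hp : ∀ x, 0 ≤ p x) (k : ℕ) :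
    0 ≤ pmom p Z (2*k) := by
  apply Finset.sum_nonneg
  intro x _
  have : Z x ^ (2*k) = (Z x ^ k)^2 := by rw [← pow_mul, mul_comm]
  rw [this]
  exact mul_nonneg (hp x) (sq_nonneg _)

lemma b2aux (x m2 m3 m5 : ℝ) (hx0 : 0 < x) (hx1 : 1 ≤ x) (hm2 : 0 ≤ m2) :
    |(x*m5 + 10*x*(x-1)*m2*m3)/(5*x^2)| ≤ (|m5| + 10*m2*|m3|)/5 := by
  rw [abs_div, abs_of_pos (show (0:ℝ) < 5*x^2 by positivity),
    div_le_div_iff₀ (by positivity) (by norm_num)]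
  have t1 : |x*m5 + 10*x*(x-1)*m2*m3| ≤ x*|m5| + 10*x*(x-1)*m2*|m3| := by
    refine (abs_add_le _ _).trans ?_
    have u1 : |x*m5| = x*|m5| := by rw [abs_mul, abs_of_pos hx0]
    have u2 : |10*x*(x-1)*m2*m3| = 10*x*(x-1)*m2*|m3| := by
      rw [abs_mul]
      congr 1
      apply abs_of_nonneg
      have : (0:ℝ) ≤ x - 1 := by linarith
      positivity
    rw [u1, u2]
  have u3 : x*|m5| ≤ x^2*|m5| := by
    nlinarith [mul_nonneg (mul_nonneg hx0.le (sub_nonneg.2 hx1)) (abs_nonneg m5)]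
  have u4 : 10*x*(x-1)*m2*|m3| ≤ 10*x^2*m2*|m3| := by
    nlinarith [mul_nonneg (mul_nonneg hx0.le hm2) (abs_nonneg m3)]
  nlinarith [t1, u3, u4]

lemma estimate (p Z : X → ℝ) (hp : ∀ x, 0 ≤ p x)
    (hm0 : pmom p Z 0 = 1) (hm1 : pmom p Z 1 = 0)
    (a : ℝ) (ha : 0 < a) (ha1 : a ≤ 1) (haw : ∀ x, a - 1 ≤ Z x)
    (n : ℕ) (hn : 1 ≤ n) :
    |(∑ ω : Fin n → X, (∏ i, p (ω i)) * Real.log (1 + (∑ i, Z (ω i))/(n:ℝ))) * (n:ℝ)^3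
      - (-(pmom p Z 2/2)*(n:ℝ)^2 + (pmom p Z 3/3 - 3*pmom p Z 2^2/4)*(n:ℝ))|
    ≤ (3*pmom p Z 2^2 + pmom p Z 4)/4 + (|pmom p Z 5| + 10*pmom p Z 2*|pmom p Z 3|)/5
      + (pmom p Z 6 + 15*pmom p Z 2*pmom p Z 4 + 10*pmom p Z 3^2 + 15*pmom p Z 2^3)/(6*a) := by
  set m2 := pmom p Z 2
  set m3 := pmom p Z 3
  set m4 := pmom p Z 4
  set m5 := pmom p Z 5
  set m6 := pmom p Z 6
  have hm2 : 0 ≤ m2 := pmom_even_nonneg p Z hp 1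
  have hm4 : 0 ≤ m4 := pmom_even_nonneg p Z hp 2
  have hm6 : 0 ≤ m6 := pmom_even_nonneg p Z hp 3
  have hx0 : (0:ℝ) < (n:ℝ) := by exact_mod_cast hn.trans_lt' (by norm_num)
  set x := (n:ℝ) with hxdef
  have hx1 : (1:ℝ) ≤ x := by rw [hxdef]; exact_mod_cast hn
  have hΔ : ∀ ω : Fin n → X, a - 1 ≤ (∑ i, Z (ω i))/x := by
    intro ω
    rw [le_div_iff₀ hx0]
    have h1 : ∀ i ∈ (univ : Finset (Fin n)), a - 1 ≤ Z (ω i) := fun i _ => haw (ω i)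
    have h2 := Finset.card_nsmul_le_sum univ (fun i => Z (ω i)) (a-1) h1
    simp only [Finset.card_univ, Fintype.card_fin, nsmul_eq_mul] at h2
    calc (a-1)*x = x*(a-1) := by ring
    _ ≤ ∑ i, Z (ω i) := h2
  have hPnn : ∀ ω : Fin n → X, 0 ≤ ∏ i, p (ω i) := by
    intro ω; exact Finset.prod_nonneg fun i _ => hp (ω i)
  set L := ∑ ω : Fin n → X, (∏ i, p (ω i)) * Real.log (1 + (∑ i, Z (ω i))/x) with hL
  set Q := smom p Z n 1 * (1/x) - smom p Z n 2 * (1/(2*x^2))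
      + smom p Z n 3 * (1/(3*x^3)) - smom p Z n 4 * (1/(4*x^4))
      + smom p Z n 5 * (1/(5*x^5)) with hQ
  clear_value L Q
  have hLQ : |L - Q| ≤ smom p Z n 6 * (1/x^6) / (6*a) := by
    rw [hQ, ← sum_P5 p Z n hn, hL, ← Finset.sum_sub_distrib]
    refine (Finset.abs_sum_le_sum_abs _ _).trans ?_
    have step : ∀ ω : Fin n → X,
        |(∏ i, p (ω i)) * Real.log (1 + (∑ i, Z (ω i))/x)
          - (∏ i, p (ω i)) * (((∑ i, Z (ω i))/x) - ((∑ i, Z (ω i))/x)^2/2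
            + ((∑ i, Z (ω i))/x)^3/3 - ((∑ i, Z (ω i))/x)^4/4 + ((∑ i, Z (ω i))/x)^5/5)|
        ≤ (∏ i, p (ω i)) * ((∑ i, Z (ω i))/x)^6 / (6*a) := by
      intro ω
      rw [← mul_sub, abs_mul, abs_of_nonneg (hPnn ω), mul_div_assoc]
      exact mul_le_mul_of_nonneg_left (log_taylor_abs a ha ha1 _ (hΔ ω)) (hPnn ω)
    refine (Finset.sum_le_sum fun ω _ => step ω).trans ?_
    rw [← Finset.sum_div, ← sum_D6 p Z n hn]
  have hsm6nn : 0 ≤ smom p Z n 6 := by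
    apply Finset.sum_nonneg
    intro ω _
    have : (∑ i, Z (ω i))^6 = ((∑ i, Z (ω i))^3)^2 := by ring
    rw [this]
    exact mul_nonneg (hPnn ω) (sq_nonneg _)
  have hm3sq : (0:ℝ) ≤ m3^2 := sq_nonneg m3
  have hm23 : (0:ℝ) ≤ m2^3 := by positivity
  have e1 : x ≤ x^3 := by nlinarith
  have e2 : x*(x-1) ≤ x^3 := by nlinarith
  have e3 : x*(x-1)*(x-2) ≤ x^3 := by nlinarith
  have h6bound : smom p Z n 6 ≤ x^3 * (m6 + 15*m2*m4 + 10*m3^2 + 15*m2^3) := by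
    rw [smom_c6 p Z hm0 hm1 n]
    have t1 : (n:ℝ) * m6 ≤ x^3 * m6 := by
      rw [← hxdef]; exact mul_le_mul_of_nonneg_right e1 hm6
    have t2 : 15 * (n:ℝ) * ((n:ℝ)-1) * m2 * m4 ≤ x^3 * (15*m2*m4) := by
      rw [← hxdef]
      have := mul_le_mul_of_nonneg_right e2 (mul_nonneg hm2 hm4)
      nlinarith [this]
    have t3 : 10 * (n:ℝ) * ((n:ℝ)-1) * m3^2 ≤ x^3 * (10*m3^2) := by
      rw [← hxdef]
      have := mul_le_mul_of_nonneg_right e2 hm3sq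
      nlinarith [this]
    have t4 : 15 * (n:ℝ) * ((n:ℝ)-1) * ((n:ℝ)-2) * m2^3 ≤ x^3 * (15*m2^3) := by
      rw [← hxdef]
      have := mul_le_mul_of_nonneg_right e3 hm23
      nlinarith [this]
    nlinarith [t1, t2, t3, t4]
  have hB1 : |L - Q| * x^3 ≤ (m6 + 15*m2*m4 + 10*m3^2 + 15*m2^3)/(6*a) := by
    have h1 : |L - Q| * x^3 ≤ smom p Z n 6 * (1/x^6)/(6*a) * x^3 :=
      mul_le_mul_of_nonneg_right hLQ (by positivity)
    refine h1.trans ?_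
    have h2 : smom p Z n 6 * (1/x^6)/(6*a) * x^3 = smom p Z n 6 / (6*a*x^3) := by
      field_simp
    rw [h2, div_le_div_iff₀ (by positivity) (by positivity)]
    nlinarith [h6bound, mul_le_mul_of_nonneg_right h6bound (le_of_lt ha)]
  have hQm : Q*x^3 - (-(m2/2)*x^2 + (m3/3 - 3*m2^2/4)*x)
      = (3*m2^2 - m4)/4 + (x*m5 + 10*x*(x-1)*m2*m3)/(5*x^2) := by
    rw [hQ, smom_c1 p Z hm0 hm1 n, smom_c2 p Z hm0 hm1 n, smom_c3 p Z hm0 hm1 n,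
      smom_c4 p Z hm0 hm1 n, smom_c5 p Z hm0 hm1 n, ← hxdef]
    field_simp
    ring
  have b1 : |(3*m2^2 - m4)/4| ≤ (3*m2^2 + m4)/4 := by
    rw [abs_le]
    constructor <;> nlinarith [sq_nonneg m2]
  have b2 : |(x*m5 + 10*x*(x-1)*m2*m3)/(5*x^2)| ≤ (|m5| + 10*m2*|m3|)/5 :=
    b2aux x m2 m3 m5 hx0 hx1 hm2
  have tri : L*x^3 - (-(m2/2)*x^2 + (m3/3 - 3*m2^2/4)*x)
      = (L - Q)*x^3 + (Q*x^3 - (-(m2/2)*x^2 + (m3/3 - 3*m2^2/4)*x)) := by ring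
  rw [tri]
  refine (abs_add_le _ _).trans ?_
  have h3 : |(L - Q)*x^3| = |L - Q| * x^3 := by
    rw [abs_mul, abs_of_pos (show (0:ℝ) < x^3 by positivity)]
  rw [h3, hQm]
  have h4 := (abs_add_le ((3*m2^2 - m4)/4) ((x*m5 + 10*x*(x-1)*m2*m3)/(5*x^2))).trans
    (by linarith [b1, b2] : |(3*m2^2 - m4)/4| + |(x*m5 + 10*x*(x-1)*m2*m3)/(5*x^2)|
        ≤ (3*m2^2 + m4)/4 + (|m5| + 10*m2*|m3|)/5)
  linarith [hB1, h4]


lemma final_arith (m2 β K U V y : ℝ) (hm2 : 0 < m2) (hK : 0 ≤ K) (hy : 2 ≤ y)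
    (hbig : 8*(3*|β| + 4*K) < m2 * (y+1))
    (hU : |U - (-(m2/2)*(y+1)^2 + β*(y+1))| ≤ K)
    (hV : |V - (-(m2/2)*y^2 + β*y)| ≤ K) :
    0 < (2*(y+1)-1)*y^3*U - 2*(y+1)^3*y*V := by
  obtain ⟨hU1, hU2⟩ := abs_le.mp hU
  obtain ⟨hV1, hV2⟩ := abs_le.mp hV
  have hb0 : 0 ≤ |β| := abs_nonneg β
  have hβ1 : β ≤ |β| := le_abs_self β
  have hy0 : (0:ℝ) < y := by linarith
  have hy3 : (0:ℝ) < y^3 := pow_pos hy0 3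
  have c1 : (0:ℝ) < (2*(y+1)-1)*y^3 := mul_pos (by linarith) hy3
  have c2 : (0:ℝ) < 2*(y+1)^3*y := mul_pos (mul_pos (by norm_num) (pow_pos (by linarith) 3)) hy0
  have l1 : (2*(y+1)-1)*y^3*((-(m2/2)*(y+1)^2 + β*(y+1)) - K) ≤ (2*(y+1)-1)*y^3*U :=
    mul_le_mul_of_nonneg_left (by linarith) c1.le
  have l2 : 2*(y+1)^3*y*V ≤ 2*(y+1)^3*y*((-(m2/2)*y^2 + β*y) + K) :=
    mul_le_mul_of_nonneg_left (by linarith) c2.le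
  have core : 0 < (2*(y+1)-1)*y^3*((-(m2/2)*(y+1)^2 + β*(y+1)) - K)
      - 2*(y+1)^3*y*((-(m2/2)*y^2 + β*y) + K) := by
    have A : 0 < (m2*(y+1) - (24*|β|+32*K)) * ((y+1)*y^3/2) :=
      mul_pos (by linarith) (by positivity)
    have hfac : (0:ℝ) ≤ (y+1)*y^2 :=
      mul_nonneg (by linarith) (sq_nonneg y)
    have B : 0 ≤ (|β| - β) * ((y+1)*y^2*(2*(y+1)+y)) :=
      mul_nonneg (by linarith) (mul_nonneg hfac (by linarith))
    have C : 0 ≤ |β| * ((y+1)*y^2*(9*y-2)) :=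
      mul_nonneg hb0 (mul_nonneg hfac (by linarith))
    have D : 0 ≤ K * (y*(12*y^3+9*y^2-6*y-2)) := by
      apply mul_nonneg hK
      apply mul_nonneg hy0.le
      nlinarith
    nlinarith [A, B, C, D]
  linarith [l1, l2, core]

end Aux

/-- The bias-corrected estimator eventually overestimates:
there is `N > 0` such that `𝔼[U_n] > A` for all `n > N`, provided
`exp(-E(X))` is not almost surely constant. -/
theorem stmt6 {X : Type*} [Fintype X] [Nonempty X]
    (p : X → ℝ) (hp : ∀ x, 0 < p x) (hsum : ∑ x, p x = 1)
    (E : X → ℝ)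
    (μ μ₂ A : ℝ)
    (hμ : μ = ∑ x, p x * Real.exp (-(E x)))
    (hμ₂ : μ₂ = (∑ x, p x * Real.exp (-(2 * E x))) - μ ^ 2)
    (hA : A = Real.log μ)
    (hvar : 0 < μ₂)
    (ET : ℕ → ℝ)
    (hET : ∀ n : ℕ, 0 < n →
      ET n = ∑ ω : Fin n → X, (∏ i, p (ω i)) *
        Real.log ((1 / (n : ℝ)) * ∑ i, Real.exp (-(E (ω i)))))
    (EU : ℕ → ℝ)
    (hEU : ∀ n : ℕ, 2 ≤ n →
      EU n = (2 * (n : ℝ) - 1) * ET n - 2 * ((n : ℝ) - 1) * ET (n - 1)) :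
    ∃ N : ℕ, 0 < N ∧ ∀ n : ℕ, N < n → A < EU n := by
  classical
  have hμpos : 0 < μ := by
    rw [hμ]
    exact Finset.sum_pos (fun x _ => mul_pos (hp x) (Real.exp_pos _)) Finset.univ_nonempty
  set Z : X → ℝ := fun x => Real.exp (-(E x))/μ - 1 with hZ
  have hpnn : ∀ x, 0 ≤ p x := fun x => (hp x).le
  have hw1 : ∑ x, p x * (Real.exp (-(E x))/μ) = 1 := by
    have h1 : ∀ x ∈ (univ : Finset X), p x * (Real.exp (-(E x))/μ)
        = (p x * Real.exp (-(E x)))/μ := fun x _ => by ring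
    rw [Finset.sum_congr rfl h1, ← Finset.sum_div, ← hμ, div_self (ne_of_gt hμpos)]
  have hm0 : pmom p Z 0 = 1 := by
    unfold pmom
    simp [hsum]
  have hm1 : pmom p Z 1 = 0 := by
    unfold pmom
    have h1 : ∀ x ∈ (univ : Finset X), p x * Z x ^ 1
        = p x * (Real.exp (-(E x))/μ) - p x := fun x _ => by
      simp only [hZ, pow_one]; ring
    rw [Finset.sum_congr rfl h1, Finset.sum_sub_distrib, hw1, hsum, sub_self]
  have hsq : ∀ x : X, Real.exp (-(2 * E x)) = Real.exp (-(E x))^2 := by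
    intro x; rw [sq, ← Real.exp_add]; congr 1; ring
  have hm2eq : pmom p Z 2 = μ₂/μ^2 := by
    unfold pmom
    have h1 : ∀ x ∈ (univ : Finset X), p x * Z x ^ 2
        = (p x * Real.exp (-(2 * E x)))/μ^2 - 2*(p x * (Real.exp (-(E x))/μ)) + p x := by
      intro x _
      simp only [hZ, hsq x]
      field_simp
      ring
    rw [Finset.sum_congr rfl h1, Finset.sum_add_distrib, Finset.sum_sub_distrib,
      ← Finset.sum_div, ← Finset.mul_sum, hw1, hsum]
    have h2 : μ₂ = (∑ x, p x * Real.exp (-(2 * E x))) - μ^2 := hμ₂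
    have hμ2ne : μ^2 ≠ 0 := by positivity
    field_simp
    linarith [h2]
  have hm2pos : 0 < pmom p Z 2 := by
    rw [hm2eq]
    exact div_pos hvar (pow_pos hμpos 2)
  -- minimum of w
  obtain ⟨x₀, -, hx₀⟩ := Finset.exists_min_image (univ : Finset X)
    (fun x => Real.exp (-(E x))/μ) ⟨Classical.arbitrary X, Finset.mem_univ _⟩
  set a : ℝ := Real.exp (-(E x₀))/μ with ha_def
  have ha : 0 < a := div_pos (Real.exp_pos _) hμpos
  have haw : ∀ x, a - 1 ≤ Z x := by
    intro x
    have := hx₀ x (Finset.mem_univ x)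
    simp only [hZ]
    linarith
  have ha1 : a ≤ 1 := by
    have h1 : ∀ x ∈ (univ : Finset X), p x * a ≤ p x * (Real.exp (-(E x))/μ) :=
      fun x _ => mul_le_mul_of_nonneg_left (hx₀ x (Finset.mem_univ x)) (hpnn x)
    have h2 := Finset.sum_le_sum h1
    rw [← Finset.sum_mul, hsum, one_mul, hw1] at h2
    exact h2
  -- identity for ET
  have hΔlb : ∀ (n : ℕ), 1 ≤ n → ∀ ω : Fin n → X, a - 1 ≤ (∑ i, Z (ω i))/(n:ℝ) := by
    intro n hn ω
    have hxpos : (0:ℝ) < (n:ℝ) := by exact_mod_cast hn.trans_lt' (by norm_num)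
    rw [le_div_iff₀ hxpos]
    have h1 : ∀ i ∈ (univ : Finset (Fin n)), a - 1 ≤ Z (ω i) := fun i _ => haw (ω i)
    have h2 := Finset.card_nsmul_le_sum univ (fun i => Z (ω i)) (a-1) h1
    simp only [Finset.card_univ, Fintype.card_fin, nsmul_eq_mul] at h2
    calc (a-1)*(n:ℝ) = (n:ℝ)*(a-1) := by ring
    _ ≤ ∑ i, Z (ω i) := h2
  have hETid : ∀ n : ℕ, 1 ≤ n →
      ET n - A = ∑ ω : Fin n → X, (∏ i, p (ω i)) * Real.log (1 + (∑ i, Z (ω i))/(n:ℝ)) := by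
    intro n hn
    have hn0 : 0 < n := hn
    have hxpos : (0:ℝ) < (n:ℝ) := by exact_mod_cast hn0
    rw [hET n hn0]
    have hper : ∀ ω : Fin n → X,
        (1/(n:ℝ)) * ∑ i, Real.exp (-(E (ω i))) = μ * (1 + (∑ i, Z (ω i))/(n:ℝ)) := by
      intro ω
      have h1 : ∀ i ∈ (univ : Finset (Fin n)), Real.exp (-(E (ω i))) = μ * (Z (ω i) + 1) := by
        intro i _
        simp only [hZ]
        field_simp
        ring
      rw [Finset.sum_congr rfl h1, ← Finset.mul_sum, Finset.sum_add_distrib,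
        Finset.sum_const, Finset.card_univ, Fintype.card_fin, nsmul_eq_mul, mul_one]
      field_simp
      ring
    have hlog : ∀ ω : Fin n → X, Real.log ((1/(n:ℝ)) * ∑ i, Real.exp (-(E (ω i))))
        = A + Real.log (1 + (∑ i, Z (ω i))/(n:ℝ)) := by
      intro ω
      have hpos2 : 0 < 1 + (∑ i, Z (ω i))/(n:ℝ) := by
        have := hΔlb n hn ω
        linarith
      rw [hper ω, Real.log_mul (ne_of_gt hμpos) (ne_of_gt hpos2), hA]
    have hsplit : ∀ ω ∈ (univ : Finset (Fin n → X)),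
        (∏ i, p (ω i)) * Real.log ((1/(n:ℝ)) * ∑ i, Real.exp (-(E (ω i))))
        = (∏ i, p (ω i)) * A
          + (∏ i, p (ω i)) * Real.log (1 + (∑ i, Z (ω i))/(n:ℝ)) := by
      intro ω _
      rw [hlog ω]
      ring
    rw [Finset.sum_congr rfl hsplit, Finset.sum_add_distrib, ← Finset.sum_mul]
    have hsum1 : ∑ ω : Fin n → X, (∏ i, p (ω i)) = 1 := by
      have := smom_c0 p Z hm0 hm1 n
      unfold smom at this
      simpa using this
    rw [hsum1, one_mul]
    ring
  -- constants
  set m2 := pmom p Z 2 with hm2def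
  set β := pmom p Z 3/3 - 3*pmom p Z 2^2/4 with hβdef
  set K := (3*pmom p Z 2^2 + pmom p Z 4)/4 + (|pmom p Z 5| + 10*pmom p Z 2*|pmom p Z 3|)/5
      + (pmom p Z 6 + 15*pmom p Z 2*pmom p Z 4 + 10*pmom p Z 3^2 + 15*pmom p Z 2^3)/(6*a)
    with hKdef
  have hm4 : 0 ≤ pmom p Z 4 := pmom_even_nonneg p Z hpnn 2
  have hm6 : 0 ≤ pmom p Z 6 := pmom_even_nonneg p Z hpnn 3
  have hm2nn : 0 ≤ m2 := hm2pos.le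
  have hK0 : 0 ≤ K := by
    rw [hKdef]
    have t1 : (0:ℝ) ≤ (3*pmom p Z 2^2 + pmom p Z 4)/4 := by positivity
    have t2 : (0:ℝ) ≤ (|pmom p Z 5| + 10*pmom p Z 2*|pmom p Z 3|)/5 := by
      apply div_nonneg _ (by norm_num)
      have := mul_nonneg (mul_nonneg (by norm_num : (0:ℝ) ≤ 10) hm2nn) (abs_nonneg (pmom p Z 3))
      have := abs_nonneg (pmom p Z 5)
      nlinarith [mul_nonneg hm2nn (abs_nonneg (pmom p Z 3)), abs_nonneg (pmom p Z 5)]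
    have t3 : (0:ℝ) ≤ (pmom p Z 6 + 15*pmom p Z 2*pmom p Z 4 + 10*pmom p Z 3^2
        + 15*pmom p Z 2^3)/(6*a) := by
      apply div_nonneg _ (by positivity)
      nlinarith [mul_nonneg hm2nn hm4, sq_nonneg (pmom p Z 3), pow_nonneg hm2nn 3]
    linarith
  refine ⟨⌈8*(3*|β| + 4*K)/m2⌉₊ + 2, by omega, fun n hn => ?_⟩
  have hn3 : 3 ≤ n := by omega
  have hn2 : 2 ≤ n - 1 := by omega
  have hn1 : 1 ≤ n - 1 := by omega
  set y : ℝ := ((n-1 : ℕ) : ℝ) with hydef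
  have hyx : y + 1 = (n:ℝ) := by
    rw [hydef]
    have : ((n-1 : ℕ) : ℝ) = (n:ℝ) - 1 := by
      have : (1:ℕ) ≤ n := by omega
      push_cast [Nat.cast_sub this]
      ring
    rw [this]; ring
  have hy2 : (2:ℝ) ≤ y := by
    rw [hydef]; exact_mod_cast hn2
  have hbig : 8*(3*|β| + 4*K) < m2 * (y+1) := by
    rw [hyx]
    have hc0 : 0 ≤ 8*(3*|β| + 4*K) := by
      have := abs_nonneg β
      linarith [hK0, abs_nonneg β]
    have h1 : 8*(3*|β| + 4*K)/m2 ≤ (⌈8*(3*|β| + 4*K)/m2⌉₊ : ℝ) := Nat.le_ceil _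
    have h2 : ((⌈8*(3*|β| + 4*K)/m2⌉₊ + 2 : ℕ) : ℝ) < (n : ℝ) := by exact_mod_cast hn
    have h3 : 8*(3*|β| + 4*K)/m2 < (n:ℝ) := by
      push_cast at h2
      linarith
    calc 8*(3*|β| + 4*K) = (8*(3*|β| + 4*K)/m2) * m2 := by
          field_simp
    _ < (n:ℝ) * m2 := by
          apply mul_lt_mul_of_pos_right h3 hm2pos
    _ = m2 * (n:ℝ) := by ring
  have hU := estimate p Z hpnn hm0 hm1 a ha ha1 haw n (by omega)
  have hV := estimate p Z hpnn hm0 hm1 a ha ha1 haw (n-1) hn1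
  rw [← hETid n (by omega)] at hU
  rw [← hETid (n-1) hn1] at hV
  rw [← hydef] at hV
  rw [← hyx] at hU
  have hpos := final_arith m2 β K ((ET n - A)*(y+1)^3) ((ET (n-1) - A)*y^3) y
    hm2pos hK0 hy2 hbig (by rw [hβdef]; exact hU) (by rw [hβdef]; exact hV)
  have hfactor : (2*(y+1)-1)*y^3*((ET n - A)*(y+1)^3) - 2*(y+1)^3*y*((ET (n-1) - A)*y^3)
      = ((y+1)^3*y^3) * ((2*(y+1)-1)*(ET n - A) - 2*y*(ET (n-1) - A)) := by ring
  have hy0 : (0:ℝ) < y := by linarith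
  have hc : (0:ℝ) < (y+1)^3*y^3 := mul_pos (pow_pos (by linarith) 3) (pow_pos hy0 3)
  have hmain : 0 < (2*(y+1)-1)*(ET n - A) - 2*y*(ET (n-1) - A) := by
    by_contra h
    push_neg at h
    nlinarith [hpos, hfactor, mul_nonpos_of_nonneg_of_nonpos hc.le h]
  rw [hEU n (by omega), ← hyx]
  have hcast : ((n - 1 : ℕ) : ℝ) = y := by rw [hydef]
  nlinarith [hmain]
end

section
/- Let V be a nonempty finite type (the vocabulary), T a positive natural number, and let P_φ be a strictly positive probability mass function on the sequence space V^T. Let E : V^T → ℝ, set Z = Σ_{x ∈ V^T} P_φ(x)·exp(−E(x)), and define the joint model P_θ(x) = P_φ(x)·exp(−E(x))/Z. Then for every 1 ≤ t ≤ T and every x_1,…,x_t ∈ V, the per-step conditional probability of the joint model satisfies: P_θ(x_t | x_1,…,x_{t−1}) = P_φ(x_t | x_1,…,x_{t−1}) · 𝔼_{x'_{t+1},…,x'_T ~ P_φ(·|x_1,…,x_t)}[exp(−E(x_1,…,x_t,x'_{t+1},…,x'_T))] / 𝔼_{x'_t,…,x'_T ~ P_φ(·|x_1,…,x_{t−1})}[exp(−E(x_1,…,x_{t−1},x'_t,…,x'_T))],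 where conditional probabilities are ratios of marginals and P_φ(·|x_1,…,x_t) is the conditional distribution of the remaining coordinates under P_φ. -/
/-- Per-step conditional probability of the joint residual EBM
`P_θ(x) = P_φ(x) exp(-E(x)) / Z` (Eq. 6 of the paper):
`P_θ(x_t|x_{<t}) = P_φ(x_t|x_{<t}) · 𝔼_{suffix ~ P_φ(·|x_{≤t})}[exp(-E)] /
𝔼_{suffix ~ P_φ(·|x_{≤t-1})}[exp(-E)]`, where conditional probabilities are
ratios of marginals on the first `t` (resp. `t-1`) coordinates. -/
theorem stmt8 {V : Type*} [Fintype V] [Nonempty V] [DecidableEq V]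
    {T : ℕ} (hT : 0 < T)
    (Pφ : (Fin T → V) → ℝ) (hpos : ∀ x, 0 < Pφ x) (hsum : ∑ x, Pφ x = 1)
    (E : (Fin T → V) → ℝ)
    (Z : ℝ) (hZ : Z = ∑ x, Pφ x * Real.exp (-(E x)))
    (Pθ : (Fin T → V) → ℝ)
    (hPθ : ∀ x, Pθ x = Pφ x * Real.exp (-(E x)) / Z)
    (t : ℕ) (ht1 : 1 ≤ t) (ht2 : t ≤ T)
    (x : Fin T → V)
    -- marginals of `Pθ` and `Pφ` on the first `s` coordinates at prefix `x`
    (margθ margφ condE : ℕ → ℝ)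
    (hmargθ : ∀ s : ℕ, margθ s = ∑ y ∈ Finset.univ.filter
        (fun y : Fin T → V => ∀ i : Fin T, (i : ℕ) < s → y i = x i), Pθ y)
    (hmargφ : ∀ s : ℕ, margφ s = ∑ y ∈ Finset.univ.filter
        (fun y : Fin T → V => ∀ i : Fin T, (i : ℕ) < s → y i = x i), Pφ y)
    -- conditional expectation of `exp(-E)` under `P_φ(·|x_1,…,x_s)`
    (hcondE : ∀ s : ℕ, condE s =
      (∑ y ∈ Finset.univ.filter
          (fun y : Fin T → V => ∀ i : Fin T, (i : ℕ) < s → y i = x i),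
          Pφ y * Real.exp (-(E y)))
      / (∑ y ∈ Finset.univ.filter
          (fun y : Fin T → V => ∀ i : Fin T, (i : ℕ) < s → y i = x i),
          Pφ y)) :
    margθ t / margθ (t - 1)
      = (margφ t / margφ (t - 1)) * (condE t / condE (t - 1)) := by

  have hZpos : 0 < Z := by
    rw [hZ]
    exact Finset.sum_pos (fun y _ => mul_pos (hpos y) (Real.exp_pos _))
      ⟨x, Finset.mem_univ x⟩
  have hSpos : ∀ s : ℕ, 0 < ∑ y ∈ Finset.univ.filter
      (fun y : Fin T → V => ∀ i : Fin T, (i : ℕ) < s → y i = x i), Pφ y := by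
    intro s
    refine Finset.sum_pos (fun y _ => hpos y) ⟨x, ?_⟩
    simp
  have hWpos : ∀ s : ℕ, 0 < ∑ y ∈ Finset.univ.filter
      (fun y : Fin T → V => ∀ i : Fin T, (i : ℕ) < s → y i = x i),
      Pφ y * Real.exp (-(E y)) := by
    intro s
    refine Finset.sum_pos (fun y _ => mul_pos (hpos y) (Real.exp_pos _)) ⟨x, ?_⟩
    simp
  have hmargθ' : ∀ s : ℕ, margθ s = (∑ y ∈ Finset.univ.filter
      (fun y : Fin T → V => ∀ i : Fin T, (i : ℕ) < s → y i = x i),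
      Pφ y * Real.exp (-(E y))) / Z := by
    intro s
    simp only [hmargθ, hPθ, ← Finset.sum_div]
  rw [hmargθ' t, hmargθ' (t-1), hmargφ t, hmargφ (t-1), hcondE t, hcondE (t-1)]
  have h1 := (hSpos t).ne'
  have h2 := (hSpos (t-1)).ne'
  have h3 := (hWpos t).ne'
  have h4 := (hWpos (t-1)).ne'
  field_simp
end

section
/- Let a, b > 0 be real numbers. The function f : ℝ → ℝ given by f(s) = a·log(1/(1+exp(s))) + b·log(1/(1+exp(−s))) attains its maximum value uniquely at s = log(b/a); that is, f(log(b/a)) ≥ f(s) for all s ∈ ℝ, with equality only when s = log(b/a). -/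
open Real

lemma stmt9_key (a b u : ℝ) (ha : 0 < a) (hb : 0 < b) (hu : 0 < u)
    (hne : u ≠ b / a) :
    b * Real.log u - (a + b) * Real.log (1 + u)
      < b * Real.log (b / a) - (a + b) * Real.log (1 + b / a) := by
  have hab : 0 < a + b := by linarith
  have h1u : 0 < 1 + u := by linarith
  have h1ba : 0 < 1 + b / a := by positivity
  set x : ℝ := a * (1 + u) / (a + b) with hxdef
  set y : ℝ := b * (1 + u) / ((a + b) * u) with hydef
  have hx : 0 < x := by positivity
  have hy : 0 < y := by positivity
  have hy1 : y ≠ 1 := by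
    intro h
    apply hne
    have : b * (1 + u) = (a + b) * u := by
      rw [hydef, div_eq_one_iff_eq (by positivity)] at h; linarith [h]
    field_simp
    nlinarith [this]
  -- log x ≥ 1 - 1/x
  have hxlog : 1 - 1 / x ≤ Real.log x := by
    have := Real.log_le_sub_one_of_pos (x := 1 / x) (by positivity)
    rw [Real.log_div one_ne_zero (ne_of_gt hx), Real.log_one] at this
    linarith
  -- log y > 1 - 1/y
  have hylog : 1 - 1 / y < Real.log y := by
    have h1y : (1 / y : ℝ) ≠ 1 := by
      intro h
      apply hy1
      field_simp at h
      linarith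
    have := Real.log_lt_sub_one_of_pos (x := 1 / y) (by positivity) h1y
    rw [Real.log_div one_ne_zero (ne_of_gt hy), Real.log_one] at this
    linarith
  -- The difference equals a * log x + b * log y
  have hdiff :
      (b * Real.log (b / a) - (a + b) * Real.log (1 + b / a))
        - (b * Real.log u - (a + b) * Real.log (1 + u))
      = a * Real.log x + b * Real.log y := by
    rw [hxdef, hydef]
    rw [Real.log_div (by positivity) (ne_of_gt hab),
        Real.log_mul (ne_of_gt ha) (ne_of_gt h1u),
        Real.log_div (show b*(1+u) ≠ 0 by positivity) (show (a+b)*u ≠ 0 by positivity),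
        Real.log_mul (ne_of_gt hb) (ne_of_gt h1u),
        Real.log_mul (ne_of_gt hab) (ne_of_gt hu)]
    have h1 : Real.log (b / a) = Real.log b - Real.log a :=
      Real.log_div (ne_of_gt hb) (ne_of_gt ha)
    have h2 : Real.log (1 + b / a) = Real.log (a + b) - Real.log a := by
      have : (1 : ℝ) + b / a = (a + b) / a := by field_simp
      rw [this, Real.log_div (ne_of_gt hab) (ne_of_gt ha)]
    rw [h1, h2]; ring
  -- lower bound sum is zero
  have hsum : a * (1 - 1 / x) + b * (1 - 1 / y) = 0 := by
    rw [hxdef, hydef]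
    field_simp
    ring
  nlinarith [mul_le_mul_of_nonneg_left hxlog (le_of_lt ha),
    mul_lt_mul_of_pos_left hylog hb]

/-- The pointwise binary NCE objective
`f(s) = a log(1/(1+exp s)) + b log(1/(1+exp(-s)))` with `a, b > 0` attains
its maximum uniquely at `s = log (b/a)`. -/
theorem stmt9 (a b : ℝ) (ha : 0 < a) (hb : 0 < b)
    (f : ℝ → ℝ)
    (hf : ∀ s, f s = a * Real.log (1 / (1 + Real.exp s))
        + b * Real.log (1 / (1 + Real.exp (-s)))) :
    (∀ s, f s ≤ f (Real.log (b / a))) ∧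
    (∀ s, f s = f (Real.log (b / a)) → s = Real.log (b / a)) := by
  have hba : (0 : ℝ) < b / a := by positivity
  -- rewrite f s = b * log (exp s) - (a+b) * log (1 + exp s)
  have hform : ∀ s, f s = b * Real.log (Real.exp s)
      - (a + b) * Real.log (1 + Real.exp s) := by
    intro s
    rw [hf s]
    have hes : 0 < Real.exp s := Real.exp_pos s
    have h1 : (0:ℝ) < 1 + Real.exp s := by linarith
    have h2 : (0:ℝ) < 1 + Real.exp (-s) := by positivity
    have key : (1:ℝ) + Real.exp (-s) = (1 + Real.exp s) * Real.exp (-s) := by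
      rw [add_mul, one_mul, ← Real.exp_add]
      simp [add_comm]
    rw [Real.log_div one_ne_zero (ne_of_gt h1),
        Real.log_div one_ne_zero (ne_of_gt h2), Real.log_one, key,
        Real.log_mul (ne_of_gt h1) (ne_of_gt (Real.exp_pos _)),
        Real.log_exp, Real.log_exp]
    ring
  have hstar : f (Real.log (b / a))
      = b * Real.log (b / a) - (a + b) * Real.log (1 + b / a) := by
    rw [hform, Real.exp_log hba]
  have main : ∀ s, s ≠ Real.log (b / a) → f s < f (Real.log (b / a)) := by
    intro s hs
    rw [hform s, hstar, Real.log_exp]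
    have hne : Real.exp s ≠ b / a := by
      intro h
      apply hs
      rw [← h, Real.log_exp]
    have := stmt9_key a b (Real.exp s) ha hb (Real.exp_pos s) hne
    rw [Real.log_exp] at this
    exact this
  constructor
  · intro s
    by_cases hs : s = Real.log (b / a)
    · rw [hs]
    · exact le_of_lt (main s hs)
  · intro s hfs
    by_contra hs
    exact absurd hfs (ne_of_lt (main s hs))
end

section
/- Let X be a nonempty finite type, and let p_data and p_φ be probability mass functions on X with the same support S. For E : X → ℝ define the conditional NCE objective J(E) = Σ_{x ∈ X} p_data(x)·log(1/(1+exp(E(x)))) + Σ_{x ∈ X} p_φ(x)·log(1/(1+exp(−E(x)))). Then the function E* given by E*(x) = log p_φ(x) − log p_data(x) for x ∈ S (and arbitrary elsewhere, e.g. 0) maximizes J, i.e. J(E*) ≥ J(E) for every E : X → ℝ; moreover any maximizer E of J agrees with E* on S, and at a maximizer one has log p_φ(x) − E(x) = log p_data(x) for every x ∈ S. -/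
private lemma nce_core (a b t : ℝ) (ha : 0 < a) (hb : 0 < b) :
    (a * Real.log (1 / (1 + Real.exp t)) + b * Real.log (1 / (1 + Real.exp (-t)))
      ≤ a * Real.log (a / (a + b)) + b * Real.log (b / (a + b))) ∧
    (a * Real.log (1 / (1 + Real.exp t)) + b * Real.log (1 / (1 + Real.exp (-t)))
      = a * Real.log (a / (a + b)) + b * Real.log (b / (a + b)) →
      t = Real.log b - Real.log a) := by
  have hp0 : 0 < Real.exp t := Real.exp_pos t
  set p := Real.exp t with hpdef
  have hps : 0 < 1 + p := by linarith
  have hab : 0 < a + b := by linarith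
  have hneg : Real.exp (-t) = p⁻¹ := Real.exp_neg t
  have hu : (1 : ℝ) / (1 + Real.exp (-t)) = p / (1 + p) := by
    rw [hneg]; field_simp; ring
  set r1 : ℝ := (a + b) / (a * (1 + p)) with hr1def
  set r2 : ℝ := p * (a + b) / (b * (1 + p)) with hr2def
  have hr1 : 0 < r1 := by positivity
  have hr2 : 0 < r2 := by positivity
  have h1 : Real.log (1 / (1 + p)) - Real.log (a / (a + b)) = Real.log r1 := by
    rw [← Real.log_div (by positivity) (by positivity)]
    congr 1
    field_simp [hr1def]
    rw [hr1def]; field_simp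
  have h2 : Real.log (p / (1 + p)) - Real.log (b / (a + b)) = Real.log r2 := by
    rw [← Real.log_div (by positivity) (by positivity)]
    congr 1
    field_simp [hr2def]
    rw [hr2def]; field_simp
  have k1 : Real.log r1 ≤ r1 - 1 := Real.log_le_sub_one_of_pos hr1
  have k2 : Real.log r2 ≤ r2 - 1 := Real.log_le_sub_one_of_pos hr2
  have hsum : a * (r1 - 1) + b * (r2 - 1) = 0 := by
    field_simp [hr1def, hr2def]
    rw [hr1def, hr2def]; field_simp; ring
  have hdiff :
      a * Real.log (1 / (1 + Real.exp t)) + b * Real.log (1 / (1 + Real.exp (-t)))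
        - (a * Real.log (a / (a + b)) + b * Real.log (b / (a + b)))
      = a * Real.log r1 + b * Real.log r2 := by
    rw [hu, ← h1, ← h2]
    ring
  constructor
  · nlinarith [mul_le_mul_of_nonneg_left k1 ha.le, mul_le_mul_of_nonneg_left k2 hb.le]
  · intro heq
    have hzero : a * Real.log r1 + b * Real.log r2 = 0 := by
      rw [← hdiff, heq]; ring
    have hr2one : r2 = 1 := by
      by_contra hne
      have k2' : Real.log r2 < r2 - 1 := Real.log_lt_sub_one_of_pos hr2 hne
      nlinarith [mul_le_mul_of_nonneg_left k1 ha.le,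
        mul_lt_mul_of_pos_left k2' hb]
    have hpval : p = b / a := by
      have : p * (a + b) = b * (1 + p) := by
        rw [hr2def] at hr2one; field_simp at hr2one
        linarith [hr2one]
      field_simp
      nlinarith [this]
    have : t = Real.log p := (Real.log_exp t).symm
    rw [this, hpval, Real.log_div hb.ne' ha.ne']

private lemma estar_val (a b : ℝ) (ha : 0 < a) (hb : 0 < b) :
    (1 : ℝ) / (1 + Real.exp (Real.log b - Real.log a)) = a / (a + b) ∧
    (1 : ℝ) / (1 + Real.exp (-(Real.log b - Real.log a))) = b / (a + b) := by
  have h1 : Real.exp (Real.log b - Real.log a) = b / a := by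
    rw [Real.exp_sub, Real.exp_log hb, Real.exp_log ha]
  have h2 : Real.exp (-(Real.log b - Real.log a)) = a / b := by
    rw [Real.exp_neg, h1]
    exact inv_div b a
  constructor
  · rw [h1]; field_simp
  · rw [h2]; field_simp; ring


/-- The NCE objective
`J(E) = Σ_x p_data(x) log(1/(1+exp(E x))) + Σ_x p_φ(x) log(1/(1+exp(-E x)))`
is maximized by `E*(x) = log p_φ(x) - log p_data(x)` on the common support
`S`; every maximizer agrees with `E*` on `S`, and at a maximizer
`log p_φ(x) - E(x) = log p_data(x)` for every `x ∈ S`. -/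
theorem stmt10 {X : Type*} [Fintype X] [Nonempty X]
    (pdata pφ : X → ℝ) (S : Finset X)
    (hd0 : ∀ x, 0 ≤ pdata x) (hφ0 : ∀ x, 0 ≤ pφ x)
    (hdsum : ∑ x, pdata x = 1) (hφsum : ∑ x, pφ x = 1)
    (hdS : ∀ x, 0 < pdata x ↔ x ∈ S)
    (hφS : ∀ x, 0 < pφ x ↔ x ∈ S)
    (J : (X → ℝ) → ℝ)
    (hJ : ∀ E : X → ℝ, J E =
      (∑ x, pdata x * Real.log (1 / (1 + Real.exp (E x))))
      + (∑ x, pφ x * Real.log (1 / (1 + Real.exp (-(E x))))))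
    (Estar : X → ℝ)
    (hEstarS : ∀ x ∈ S, Estar x = Real.log (pφ x) - Real.log (pdata x))
    (hEstar0 : ∀ x ∉ S, Estar x = 0) :
    (∀ E : X → ℝ, J E ≤ J Estar) ∧
    (∀ E : X → ℝ, (∀ E' : X → ℝ, J E' ≤ J E) →
      ∀ x ∈ S, E x = Estar x ∧
        Real.log (pφ x) - E x = Real.log (pdata x)) := by
  set f : (X → ℝ) → X → ℝ := fun E x =>
    pdata x * Real.log (1 / (1 + Real.exp (E x)))
      + pφ x * Real.log (1 / (1 + Real.exp (-(E x)))) with hf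
  have key : ∀ E : X → ℝ, J E = ∑ x, f E x := by
    intro E
    rw [hJ E, ← Finset.sum_add_distrib]
  -- value of f at Estar on S
  have hstarval : ∀ x ∈ S, f Estar x =
      pdata x * Real.log (pdata x / (pdata x + pφ x))
        + pφ x * Real.log (pφ x / (pdata x + pφ x)) := by
    intro x hx
    have ha : 0 < pdata x := (hdS x).mpr hx
    have hb : 0 < pφ x := (hφS x).mpr hx
    have hv := estar_val (pdata x) (pφ x) ha hb
    simp only [hf, hEstarS x hx, hv.1, hv.2]
  -- pointwise inequality
  have hpt : ∀ (E : X → ℝ) (x : X), f E x ≤ f Estar x := by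
    intro E x
    by_cases hx : x ∈ S
    · have ha : 0 < pdata x := (hdS x).mpr hx
      have hb : 0 < pφ x := (hφS x).mpr hx
      rw [hstarval x hx]
      exact (nce_core (pdata x) (pφ x) (E x) ha hb).1
    · have ha : pdata x = 0 := le_antisymm (not_lt.mp (fun h => hx ((hdS x).mp h))) (hd0 x)
      have hb : pφ x = 0 := le_antisymm (not_lt.mp (fun h => hx ((hφS x).mp h))) (hφ0 x)
      simp [hf, ha, hb]
  have hle : ∀ E : X → ℝ, J E ≤ J Estar := by
    intro E
    rw [key E, key Estar]
    exact Finset.sum_le_sum fun x _ => hpt E x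
  refine ⟨hle, ?_⟩
  intro E hmax x hx
  have heqJ : J E = J Estar := le_antisymm (hle E) (hmax Estar)
  have hsum0 : ∑ x, (f Estar x - f E x) = 0 := by
    rw [Finset.sum_sub_distrib, ← key E, ← key Estar, heqJ, sub_self]
  have hzero : ∀ y ∈ Finset.univ, f Estar y - f E y = 0 :=
    (Finset.sum_eq_zero_iff_of_nonneg
      (fun y _ => sub_nonneg.mpr (hpt E y))).mp hsum0
  have hfeq : f E x = f Estar x := by
    have := hzero x (Finset.mem_univ x)
    linarith
  have ha : 0 < pdata x := (hdS x).mpr hx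
  have hb : 0 < pφ x := (hφS x).mpr hx
  have hEx : E x = Real.log (pφ x) - Real.log (pdata x) := by
    apply (nce_core (pdata x) (pφ x) (E x) ha hb).2
    rw [← hstarval x hx]
    exact hfeq
  refine ⟨by rw [hEx, hEstarS x hx], by rw [hEx]; ring⟩
end

section
/- Let X be a nonempty finite type, p a strictly positive probability mass function on X, and E : X → ℝ. Set Z = Σ_{x ∈ X} p(x)·exp(−E(x)) and define the joint model P_θ(x) = p(x)·exp(−E(x))/Z. Let X_1,…,X_n be i.i.d. with law p, and consider the importance resampling scheme that, given the samples, outputs X_i with probability exp(−E(X_i)) / Σ_{j=1}^n exp(−E(X_j)). Then for every x ∈ X, the probability that the resampled output equals x, namely 𝔼[ Σ_{i=1}^n 1{X_i = x}·exp(−E(X_i)) / Σ_{j=1}^n exp(−E(X_j)) ], converges to P_θ(x) as n → ∞. -/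
open Finset

lemma sumProd' {X : Type*} [Fintype X] [DecidableEq X] {n : ℕ} (h : Fin n → X → ℝ) :
    ∑ ω : Fin n → X, ∏ i, h i (ω i) = ∏ i, ∑ x, h i x := by
  rw [Finset.prod_univ_sum, Fintype.piFinset_univ]

lemma expect_one {X : Type*} [Fintype X] [DecidableEq X] (p : X → ℝ) (hsum : ∑ x, p x = 1)
    {n : ℕ} (i : Fin n) (f : X → ℝ) :
    ∑ ω : Fin n → X, (∏ k, p (ω k)) * f (ω i) = ∑ x, p x * f x := by
  have h1 : ∀ ω : Fin n → X, (∏ k, p (ω k)) * f (ω i)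
      = ∏ k, (p (ω k) * (if k = i then f (ω k) else 1)) := by
    intro ω
    rw [Finset.prod_mul_distrib]
    congr 1
    simp
  simp_rw [h1]
  rw [sumProd' (fun k x => p x * if k = i then f x else 1)]
  have h2 : ∀ k : Fin n, (∑ x, p x * (if k = i then f x else 1))
      = if k = i then ∑ x, p x * f x else 1 := by
    intro k; by_cases hk : k = i <;> simp [hk, hsum]
  simp_rw [h2]
  simp

lemma expect_two {X : Type*} [Fintype X] [DecidableEq X] (p : X → ℝ) (hsum : ∑ x, p x = 1)
    {n : ℕ} {i j : Fin n} (hij : i ≠ j) (f g : X → ℝ) :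
    ∑ ω : Fin n → X, (∏ k, p (ω k)) * (f (ω i) * g (ω j))
      = (∑ x, p x * f x) * (∑ x, p x * g x) := by
  have key : ∀ ω : Fin n → X, (∏ k, p (ω k)) * (f (ω i) * g (ω j))
      = ∏ k, (p (ω k) * ((if k = i then f (ω k) else 1) * (if k = j then g (ω k) else 1))) := by
    intro ω
    rw [Finset.prod_mul_distrib, Finset.prod_mul_distrib]
    simp
  simp_rw [key]
  rw [sumProd' (fun k x => p x * ((if k = i then f x else 1) * (if k = j then g x else 1)))]
  have h2 : ∀ k : Fin n, (∑ x, p x * ((if k = i then f x else 1) * (if k = j then g x else 1)))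
      = (if k = i then ∑ x, p x * f x else 1) * (if k = j then ∑ x, p x * g x else 1) := by
    intro k
    by_cases h1 : k = i <;> by_cases h2 : k = j
    · exact absurd (h1 ▸ h2) hij
    all_goals simp [h1, h2, hsum, hij, hij.symm]
  simp_rw [h2]
  rw [Finset.prod_mul_distrib]
  simp

lemma mass' {X : Type*} [Fintype X] [DecidableEq X] (p : X → ℝ) (hsum : ∑ x, p x = 1) (n : ℕ) :
    ∑ ω : Fin n → X, ∏ k, p (ω k) = 1 := by
  rw [sumProd' (fun _ x => p x)]
  simp [hsum]

lemma secmom' {X : Type*} [Fintype X] [DecidableEq X] (p : X → ℝ) (hsum : ∑ x, p x = 1)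
    (g : X → ℝ) (hg0 : ∑ x, p x * g x = 0) (n : ℕ) :
    ∑ ω : Fin n → X, (∏ k, p (ω k)) * (∑ i, g (ω i))^2
      = n * ∑ x, p x * (g x * g x) := by
  have expand : ∀ ω : Fin n → X, (∏ k, p (ω k)) * (∑ i, g (ω i))^2
      = ∑ i, ∑ j, (∏ k, p (ω k)) * (g (ω i) * g (ω j)) := by
    intro ω
    rw [sq, Finset.sum_mul_sum]
    simp [Finset.mul_sum]
  simp_rw [expand]
  rw [Finset.sum_comm]
  have hterm : ∀ i j : Fin n, (∑ ω : Fin n → X, (∏ k, p (ω k)) * (g (ω i) * g (ω j)))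
      = if i = j then ∑ x, p x * (g x * g x) else 0 := by
    intro i j
    by_cases hij : i = j
    · subst hij
      simp only [if_pos rfl]
      exact expect_one p hsum i (fun z => g z * g z)
    · rw [if_neg hij, expect_two p hsum hij, hg0, mul_zero]
  calc ∑ i : Fin n, ∑ ω : Fin n → X, ∑ j, (∏ k, p (ω k)) * (g (ω i) * g (ω j))
      = ∑ i : Fin n, ∑ j : Fin n, ∑ ω : Fin n → X, (∏ k, p (ω k)) * (g (ω i) * g (ω j)) := by
        refine Finset.sum_congr rfl fun i _ => ?_
        rw [Finset.sum_comm]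
    _ = ∑ i : Fin n, ∑ j : Fin n, if i = j then ∑ x, p x * (g x * g x) else 0 := by
        simp_rw [hterm]
    _ = n * ∑ x, p x * (g x * g x) := by
        simp [Finset.sum_ite_eq, Finset.card_univ]

set_option maxHeartbeats 2000000 in
lemma master' {X : Type*} [Fintype X] [Nonempty X] [DecidableEq X]
    (p : X → ℝ) (hp : ∀ x, 0 < p x) (hsum : ∑ x, p x = 1)
    (w : X → ℝ) (hwpos : ∀ y, 0 < w y)
    (W : ℝ) (hWdef : W = ∑ y, w y)
    (Z : ℝ) (hZ : Z = ∑ x, p x * w x) (hZpos : 0 < Z)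
    (x : X) (htle : p x * w x ≤ Z)
    (t : ℝ) (ht : t = p x * w x / Z) (ht0 : 0 ≤ t) (ht1 : t ≤ 1)
    (hple : ∀ y, p y ≤ 1)
    (K : ℝ) (hKdef : K = (Fintype.card X : ℝ))
    (C : ℝ) (hCdef : C = 2 * (Z * w x + p x * w x * W) / Z^2) (hC0 : 0 ≤ C)
    (δ : ℝ) (hδ : 0 < δ) (hδW : δ * W ≤ Z / 2) (n : ℕ) (hn : 1 ≤ n) :
    |(∑ ω : Fin n → X, (∏ i, p (ω i)) *
        ((∑ i, if ω i = x then w (ω i) else 0) / (∑ j, w (ω j)))) - t|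
      ≤ C * δ + 2 * K / (n * δ^2) := by
  have hnR : (1:ℝ) ≤ (n:ℝ) := by exact_mod_cast hn
  have hnpos : (0:ℝ) < n := by linarith
  have hWpos : 0 < W := by rw [hWdef]; exact Finset.sum_pos (fun y _ => hwpos y) univ_nonempty
  set μ : (Fin n → X) → ℝ := fun ω => ∏ k, p (ω k) with hμdef
  have hμ0 : ∀ ω, 0 ≤ μ ω := fun ω => Finset.prod_nonneg fun k _ => (hp _).le
  have hμsum : ∑ ω : Fin n → X, μ ω = 1 := mass' p hsum n
  set c : X → (Fin n → X) → ℝ := fun y ω => ∑ i, if ω i = y then (1:ℝ) else 0 with hcdef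
  set g : X → X → ℝ := fun y z => (if z = y then (1:ℝ) else 0) - p y with hgdef
  have hd : ∀ y (ω : Fin n → X), c y ω - n * p y = ∑ i, g y (ω i) := by
    intro y ω
    simp only [hcdef, hgdef, Finset.sum_sub_distrib, Finset.sum_const, Finset.card_univ,
      Fintype.card_fin, nsmul_eq_mul]
  have hg0 : ∀ y, ∑ z, p z * g y z = 0 := by
    intro y
    simp only [hgdef, mul_sub, Finset.sum_sub_distrib, ← Finset.sum_mul, hsum, one_mul,
      mul_ite, mul_one, mul_zero, Finset.sum_ite_eq', Finset.mem_univ, if_pos]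
    ring
  have hvar : ∀ y, ∑ ω : Fin n → X, μ ω * (∑ i, g y (ω i))^2 ≤ n := by
    intro y
    rw [hμdef]
    rw [secmom' p hsum (g y) (hg0 y) n]
    have hSle : ∑ z, p z * (g y z * g y z) ≤ 1 := by
      rw [← hsum]
      refine Finset.sum_le_sum fun z _ => ?_
      have h1 : 0 < p z := hp z
      have h2 : 0 < p y := hp y
      have h3 : p y ≤ 1 := hple y
      have h4 : g y z * g y z ≤ 1 := by
        simp only [hgdef]
        by_cases h : z = y <;> simp [h] <;> nlinarith
      nlinarith
    nlinarith
  -- Chebyshev / union bound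
  have hind0 : ∀ (y : X) (ω : Fin n → X),
      0 ≤ (if (n:ℝ) * δ < |c y ω - n * p y| then μ ω else 0) := by
    intro y ω; split
    exacts [hμ0 ω, le_rfl]
  have hcheb : ∑ ω ∈ univ.filter (fun ω => ¬ ∀ y, |c y ω - n * p y| ≤ n * δ), μ ω
      ≤ K / (n * δ^2) := by
    have step1 : ∀ ω ∈ univ.filter (fun ω => ¬ ∀ y, |c y ω - n * p y| ≤ n * δ),
        μ ω ≤ ∑ y, (if n * δ < |c y ω - n * p y| then μ ω else 0) := by
      intro ω hω
      rw [Finset.mem_filter] at hω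
      push_neg at hω
      obtain ⟨y, hy⟩ := hω.2
      have : (if n * δ < |c y ω - n * p y| then μ ω else 0) = μ ω := if_pos hy
      calc μ ω = (if n * δ < |c y ω - n * p y| then μ ω else 0) := this.symm
        _ ≤ ∑ y, (if n * δ < |c y ω - n * p y| then μ ω else 0) :=
          Finset.single_le_sum (f := fun z => if (n:ℝ) * δ < |c z ω - n * p z| then μ ω else 0)
            (fun z _ => hind0 z ω) (mem_univ y)
    have step2 : ∀ y, ∑ ω : Fin n → X, (if n * δ < |c y ω - n * p y| then μ ω else 0)
        ≤ 1 / (n * δ^2) := by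
      intro y
      have key : ∀ ω : Fin n → X, ((n:ℝ) * δ)^2 * (if n * δ < |c y ω - n * p y| then μ ω else 0)
          ≤ μ ω * (∑ i, g y (ω i))^2 := by
        intro ω
        rw [← hd y ω]
        by_cases h : n * δ < |c y ω - n * p y|
        · rw [if_pos h]
          have h1 : ((n:ℝ) * δ)^2 ≤ (c y ω - n * p y)^2 := by
            rw [← sq_abs (c y ω - n * p y)]
            have h2 : 0 ≤ (n:ℝ) * δ := by positivity
            nlinarith [h.le]
          nlinarith [hμ0 ω]
        · rw [if_neg h, mul_zero]
          have := hμ0 ω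
          positivity
      have hsums : ((n:ℝ) * δ)^2 * ∑ ω : Fin n → X, (if n * δ < |c y ω - n * p y| then μ ω else 0)
          ≤ (n:ℝ) := by
        rw [Finset.mul_sum]
        calc ∑ ω : Fin n → X, ((n:ℝ) * δ)^2 * (if n * δ < |c y ω - n * p y| then μ ω else 0)
            ≤ ∑ ω : Fin n → X, μ ω * (∑ i, g y (ω i))^2 := Finset.sum_le_sum fun ω _ => key ω
          _ ≤ n := hvar y
      have hnd2 : (0:ℝ) < ((n:ℝ) * δ)^2 := by positivity
      have hfrom : (∑ ω : Fin n → X, (if (n:ℝ) * δ < |c y ω - n * p y| then μ ω else 0))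
          ≤ (n:ℝ) / ((n:ℝ)*δ)^2 := by
        rw [le_div_iff₀ hnd2]
        calc (∑ ω : Fin n → X, (if (n:ℝ) * δ < |c y ω - n * p y| then μ ω else 0)) * ((n:ℝ)*δ)^2
            = ((n:ℝ)*δ)^2 * ∑ ω : Fin n → X, (if (n:ℝ) * δ < |c y ω - n * p y| then μ ω else 0) := by ring
          _ ≤ (n:ℝ) := hsums
      have h6 : (n:ℝ) / ((n:ℝ)*δ)^2 = 1 / ((n:ℝ) * δ^2) := by
        field_simp
      rw [h6] at hfrom
      exact hfrom
    calc ∑ ω ∈ univ.filter (fun ω => ¬ ∀ y, |c y ω - n * p y| ≤ n * δ), μ ω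
        ≤ ∑ ω ∈ univ.filter (fun ω => ¬ ∀ y, |c y ω - n * p y| ≤ n * δ),
            ∑ y, (if n * δ < |c y ω - n * p y| then μ ω else 0) := Finset.sum_le_sum step1
      _ ≤ ∑ ω : Fin n → X, ∑ y, (if n * δ < |c y ω - n * p y| then μ ω else 0) := by
          refine Finset.sum_le_sum_of_subset_of_nonneg (Finset.filter_subset _ _) ?_
          intro ω _ _
          exact Finset.sum_nonneg fun y _ => hind0 y ω
      _ = ∑ y, ∑ ω : Fin n → X, (if n * δ < |c y ω - n * p y| then μ ω else 0) := Finset.sum_comm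
      _ ≤ ∑ _y : X, 1 / ((n:ℝ) * δ^2) := Finset.sum_le_sum fun y _ => step2 y
      _ = K / ((n:ℝ) * δ^2) := by
          rw [Finset.sum_const, Finset.card_univ, nsmul_eq_mul, hKdef]
          ring
  -- per-ω facts
  haveI : Nonempty (Fin n) := Fin.pos_iff_nonempty.mp hn
  have hbpos : ∀ ω : Fin n → X, 0 < ∑ j, w (ω j) := fun ω =>
    Finset.sum_pos (fun j _ => hwpos _) univ_nonempty
  set F : (Fin n → X) → ℝ := fun ω =>
    (∑ i, if ω i = x then w (ω i) else 0) / (∑ j, w (ω j)) with hFdef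
  have hF0 : ∀ ω, 0 ≤ F ω := by
    intro ω
    refine div_nonneg (Finset.sum_nonneg fun i _ => ?_) (hbpos ω).le
    split
    · exact (hwpos _).le
    · exact le_rfl
  have hF1 : ∀ ω, F ω ≤ 1 := by
    intro ω
    rw [hFdef]
    refine (div_le_one (hbpos ω)).mpr (Finset.sum_le_sum fun i _ => ?_)
    split
    · exact le_rfl
    · exact (hwpos _).le
  have hFt2 : ∀ ω, |F ω - t| ≤ 2 := by
    intro ω
    rw [abs_le]
    constructor <;> [linarith [hF0 ω]; linarith [hF1 ω]]
  -- good-event pointwise bound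
  have hgood : ∀ ω : Fin n → X, (∀ y, |c y ω - n * p y| ≤ n * δ) → |F ω - t| ≤ C * δ := by
    intro ω hbnd
    have ha : (∑ i, if ω i = x then w (ω i) else 0) = c x ω * w x := by
      rw [hcdef, Finset.sum_mul]
      refine Finset.sum_congr rfl fun i _ => ?_
      by_cases h : ω i = x <;> simp [h]
    have hb : (∑ j, w (ω j)) = ∑ y, c y ω * w y := by
      calc ∑ j, w (ω j) = ∑ j, ∑ y, (if ω j = y then w y else 0) := by
            refine Finset.sum_congr rfl fun j _ => ?_
            simp [Finset.sum_ite_eq]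
        _ = ∑ y, ∑ j, (if ω j = y then w y else 0) := Finset.sum_comm
        _ = ∑ y, c y ω * w y := by
            refine Finset.sum_congr rfl fun y _ => ?_
            rw [hcdef, Finset.sum_mul]
            refine Finset.sum_congr rfl fun j _ => ?_
            by_cases h : ω j = y <;> simp [h]
    have hax : |c x ω * w x - n * (p x * w x)| ≤ n * δ * w x := by
      have hid : c x ω * w x - n * (p x * w x) = (c x ω - n * p x) * w x := by ring
      rw [hid, abs_mul, abs_of_pos (hwpos x)]
      exact mul_le_mul_of_nonneg_right (hbnd x) (hwpos x).le
    have hnZ : (n:ℝ) * Z = ∑ y, ((n:ℝ) * p y) * w y := by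
      rw [hZ, Finset.mul_sum]
      exact Finset.sum_congr rfl fun y _ => by ring
    have hbZ : |(∑ y, c y ω * w y) - n * Z| ≤ n * δ * W := by
      rw [hnZ, ← Finset.sum_sub_distrib]
      calc |∑ y, (c y ω * w y - (n:ℝ) * p y * w y)|
          ≤ ∑ y, |c y ω * w y - (n:ℝ) * p y * w y| := Finset.abs_sum_le_sum_abs _ _
        _ ≤ ∑ y, n * δ * w y := by
            refine Finset.sum_le_sum fun y _ => ?_
            have hid : c y ω * w y - (n:ℝ) * p y * w y = (c y ω - n * p y) * w y := by ring
            rw [hid, abs_mul, abs_of_pos (hwpos y)]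
            exact mul_le_mul_of_nonneg_right (hbnd y) (hwpos y).le
        _ = n * δ * W := by rw [hWdef, ← Finset.mul_sum]
    have hblow : (n:ℝ) * Z / 2 ≤ ∑ y, c y ω * w y := by
      have h1 := (abs_le.mp hbZ).1
      have h2 : (n:ℝ) * δ * W ≤ (n:ℝ) * (Z/2) := by nlinarith
      linarith
    have hbpos' : (0:ℝ) < ∑ y, c y ω * w y :=
      lt_of_lt_of_le (by positivity) hblow
    have hdiff : F ω - t = ((c x ω * w x) * Z - (p x * w x) * (∑ y, c y ω * w y))
        / ((∑ y, c y ω * w y) * Z) := by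
      rw [hFdef]
      simp only
      rw [ha, hb, ht]
      field_simp
    rw [hdiff, abs_div, abs_of_pos (mul_pos hbpos' hZpos)]
    have hnum : |(c x ω * w x) * Z - (p x * w x) * (∑ y, c y ω * w y)|
        ≤ ((n:ℝ) * δ) * (Z * w x + p x * w x * W) := by
      have hid : (c x ω * w x) * Z - (p x * w x) * (∑ y, c y ω * w y)
          = Z * (c x ω * w x - n * (p x * w x))
            + (p x * w x) * ((n:ℝ) * Z - ∑ y, c y ω * w y) := by ring
      rw [hid]
      calc |Z * (c x ω * w x - n * (p x * w x))
            + (p x * w x) * ((n:ℝ) * Z - ∑ y, c y ω * w y)|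
          ≤ |Z * (c x ω * w x - n * (p x * w x))|
            + |(p x * w x) * ((n:ℝ) * Z - ∑ y, c y ω * w y)| := abs_add_le _ _
        _ = Z * |c x ω * w x - n * (p x * w x)|
            + (p x * w x) * |(n:ℝ) * Z - ∑ y, c y ω * w y| := by
            rw [abs_mul, abs_mul, abs_of_pos hZpos, abs_of_pos (mul_pos (hp x) (hwpos x))]
        _ ≤ Z * ((n:ℝ) * δ * w x) + (p x * w x) * ((n:ℝ) * δ * W) := by
            refine add_le_add (mul_le_mul_of_nonneg_left hax hZpos.le) ?_
            refine mul_le_mul_of_nonneg_left ?_ (mul_pos (hp x) (hwpos x)).le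
            rw [abs_sub_comm]
            exact hbZ
        _ = ((n:ℝ) * δ) * (Z * w x + p x * w x * W) := by ring
    have hden : ((n:ℝ) * Z / 2) * Z ≤ (∑ y, c y ω * w y) * Z :=
      mul_le_mul_of_nonneg_right hblow hZpos.le
    calc |(c x ω * w x) * Z - (p x * w x) * (∑ y, c y ω * w y)|
          / ((∑ y, c y ω * w y) * Z)
        ≤ (((n:ℝ) * δ) * (Z * w x + p x * w x * W)) / (((n:ℝ) * Z / 2) * Z) := by
          refine div_le_div₀ (le_trans (abs_nonneg _) hnum) hnum (mul_pos (by nlinarith : (0:ℝ) < (n:ℝ)*Z/2) hZpos) hden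
      _ = C * δ := by
          rw [hCdef]
          have hn0 : (n:ℝ) ≠ 0 := ne_of_gt hnpos
          field_simp
  -- assembly
  have hsplit : (∑ ω : Fin n → X, μ ω * F ω) - t = ∑ ω : Fin n → X, μ ω * (F ω - t) := by
    simp only [mul_sub]
    rw [Finset.sum_sub_distrib, ← Finset.sum_mul, hμsum, one_mul]
  rw [hsplit]
  have hCδ0 : 0 ≤ C * δ := mul_nonneg hC0 hδ.le
  calc |∑ ω : Fin n → X, μ ω * (F ω - t)|
      ≤ ∑ ω : Fin n → X, |μ ω * (F ω - t)| := Finset.abs_sum_le_sum_abs _ _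
    _ = ∑ ω : Fin n → X, μ ω * |F ω - t| := by
        refine Finset.sum_congr rfl fun ω _ => ?_
        rw [abs_mul, abs_of_nonneg (hμ0 ω)]
    _ = (∑ ω ∈ univ.filter (fun ω => ∀ y, |c y ω - n * p y| ≤ n * δ), μ ω * |F ω - t|)
        + ∑ ω ∈ univ.filter (fun ω => ¬ ∀ y, |c y ω - n * p y| ≤ n * δ), μ ω * |F ω - t| :=
        (Finset.sum_filter_add_sum_filter_not univ _ _).symm
    _ ≤ (∑ ω ∈ univ.filter (fun ω => ∀ y, |c y ω - n * p y| ≤ n * δ), μ ω * (C * δ))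
        + ∑ ω ∈ univ.filter (fun ω => ¬ ∀ y, |c y ω - n * p y| ≤ n * δ), μ ω * 2 := by
        refine add_le_add (Finset.sum_le_sum fun ω hω => ?_) (Finset.sum_le_sum fun ω hω => ?_)
        · rw [Finset.mem_filter] at hω
          exact mul_le_mul_of_nonneg_left (hgood ω hω.2) (hμ0 ω)
        · exact mul_le_mul_of_nonneg_left (hFt2 ω) (hμ0 ω)
    _ = (∑ ω ∈ univ.filter (fun ω => ∀ y, |c y ω - n * p y| ≤ n * δ), μ ω) * (C * δ)
        + (∑ ω ∈ univ.filter (fun ω => ¬ ∀ y, |c y ω - n * p y| ≤ n * δ), μ ω) * 2 := by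
        rw [Finset.sum_mul, Finset.sum_mul]
    _ ≤ 1 * (C * δ) + (K / ((n:ℝ) * δ^2)) * 2 := by
        refine add_le_add (mul_le_mul_of_nonneg_right ?_ hCδ0)
          (mul_le_mul_of_nonneg_right hcheb (by norm_num))
        rw [← hμsum]
        exact Finset.sum_le_sum_of_subset_of_nonneg (Finset.filter_subset _ _)
          (fun ω _ _ => hμ0 ω)
    _ = C * δ + 2 * K / ((n:ℝ) * δ^2) := by ring

set_option maxHeartbeats 1000000 in
/-- Self-normalized importance resampling (Algorithm 1) is
asymptotically exact: for `X_1,…,X_n` i.i.d. with law `p`, the probability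
that the resampled output (choosing `X_i` with probability proportional to
`exp(-E(X_i))`) equals `x` converges to `P_θ(x) = p(x) exp(-E(x)) / Z`
as `n → ∞`. -/
theorem stmt12 {X : Type*} [Fintype X] [Nonempty X] [DecidableEq X]
    (p : X → ℝ) (hp : ∀ x, 0 < p x) (hsum : ∑ x, p x = 1)
    (E : X → ℝ)
    (Z : ℝ) (hZ : Z = ∑ x, p x * Real.exp (-(E x)))
    (Pθ : X → ℝ) (hPθ : ∀ x, Pθ x = p x * Real.exp (-(E x)) / Z)
    (x : X) :
    Filter.Tendsto (fun n : ℕ =>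
      ∑ ω : Fin n → X, (∏ i, p (ω i)) *
        ((∑ i, if ω i = x then Real.exp (-(E (ω i))) else 0) /
         (∑ j, Real.exp (-(E (ω j)))))) Filter.atTop (nhds (Pθ x)) := by
  set w : X → ℝ := fun y => Real.exp (-(E y)) with hwdef
  have hwpos : ∀ y, 0 < w y := fun y => Real.exp_pos _
  set W : ℝ := ∑ y, w y with hWdef
  have hWpos : 0 < W := Finset.sum_pos (fun y _ => hwpos y) univ_nonempty
  have hZpos : 0 < Z := by
    rw [hZ]; exact Finset.sum_pos (fun y _ => mul_pos (hp y) (hwpos y)) univ_nonempty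
  set t : ℝ := Pθ x with htdef
  have ht : t = p x * w x / Z := hPθ x
  have ht0 : 0 ≤ t := by rw [ht]; exact div_nonneg (mul_nonneg (hp x).le (hwpos x).le) hZpos.le
  have htle : p x * w x ≤ Z := by
    rw [hZ]
    exact Finset.single_le_sum (fun y _ => le_of_lt (mul_pos (hp y) (hwpos y))) (mem_univ x)
  have ht1 : t ≤ 1 := by rw [ht]; exact div_le_one_of_le₀ htle hZpos.le
  have hple : ∀ y, p y ≤ 1 := by
    intro y
    rw [← hsum]
    exact Finset.single_le_sum (fun z _ => (hp z).le) (mem_univ y)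
  -- count function
  set K : ℝ := (Fintype.card X : ℝ) with hKdef
  have hKpos : 0 < K := by
    simp only [hKdef]; exact_mod_cast Fintype.card_pos
  set C : ℝ := 2 * (Z * w x + p x * w x * W) / Z^2 with hCdef
  have hC0 : 0 ≤ C := by
    have h1 : 0 < Z * w x := mul_pos hZpos (hwpos x)
    have h2 : 0 < p x * w x * W := mul_pos (mul_pos (hp x) (hwpos x)) hWpos
    have h3 : (0:ℝ) < Z^2 := by positivity
    rw [hCdef]
    exact div_nonneg (by nlinarith) h3.le
  have hfdef : ∀ n : ℕ, ∀ ω : Fin n → X,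
      ((∑ i, if ω i = x then w (ω i) else 0) / (∑ j, w (ω j))) =
      ((∑ i, if ω i = x then w (ω i) else 0) / (∑ j, w (ω j))) := fun _ _ => rfl
  -- master bound
  have master : ∀ δ : ℝ, 0 < δ → δ * W ≤ Z / 2 → ∀ n : ℕ, 1 ≤ n →
      |(∑ ω : Fin n → X, (∏ i, p (ω i)) * ((∑ i, if ω i = x then w (ω i) else 0) / (∑ j, w (ω j)))) - t| ≤ C * δ + 2 * K / (n * δ^2) :=
    fun δ hδ hδW n hn => master' p hp hsum w hwpos W hWdef Z (by rw [hZ]) hZpos x htle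
      t ht ht0 ht1 hple K hKdef C hCdef hC0 δ hδ hδW n hn
  -- epsilon argument
  rw [Metric.tendsto_atTop]
  intro ε hε
  set δ : ℝ := min (Z / (2 * W)) (ε / (2 * (C + 1))) with hδdef
  have hδpos : 0 < δ := lt_min (by positivity) (by positivity)
  have hδW : δ * W ≤ Z / 2 := by
    have : δ ≤ Z / (2 * W) := min_le_left _ _
    calc δ * W ≤ (Z / (2 * W)) * W := by nlinarith
      _ = Z / 2 := by rw [div_mul_eq_mul_div, mul_comm Z W, mul_comm 2 W, mul_div_mul_left _ _ hWpos.ne']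
  have hCδ : C * δ < ε / 2 := by
    have h1 : δ ≤ ε / (2 * (C + 1)) := min_le_right _ _
    have h2 : C * δ ≤ C * (ε / (2 * (C + 1))) := by nlinarith
    have h3 : C * (ε / (2 * (C + 1))) < ε / 2 := by
      have hx : C * (ε / (2 * (C + 1))) = C * ε / (2 * (C + 1)) := by ring
      rw [hx, div_lt_div_iff₀ (by positivity) (by norm_num : (0:ℝ) < 2)]
      nlinarith
    linarith
  obtain ⟨N, hN⟩ := Filter.eventually_atTop.mp
    ((tendsto_const_div_atTop_nhds_zero_nat (2 * K / δ^2)).eventually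
      (gt_mem_nhds (by linarith : (0:ℝ) < ε / 2 - C * δ)))
  refine ⟨max N 1, fun n hn => ?_⟩
  have hn1 : 1 ≤ n := le_trans (le_max_right _ _) hn
  have hnN : N ≤ n := le_trans (le_max_left _ _) hn
  have hb := master δ hδpos hδW n hn1
  have h4 : 2 * K / (n * δ^2) = 2 * K / δ^2 / n := by
    rw [div_div]; ring_nf
  have h5 : 2 * K / δ^2 / n < ε / 2 - C * δ := hN n hnN
  rw [Real.dist_eq]
  calc |(∑ ω : Fin n → X, (∏ i, p (ω i)) * ((∑ i, if ω i = x then w (ω i) else 0) / (∑ j, w (ω j)))) - t|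
      ≤ C * δ + 2 * K / (n * δ^2) := hb
    _ < ε := by rw [h4]; linarith
end
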